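/- arXiv:1004.5230 — 8 statements merged into one kernel-verified Lean document; each statement's English description precedes it below -/
import Mathlib

section
/- If G is a finite twin-free graph with at least one edge on n vertices, then G admits an identifying code of size at most n-1. -/
open SimpleGraph

/-- The closed ball of radius 1 (closed neighborhood) of `x`. -/
def ball {V : Type*} (G : SimpleGraph V) (x : V) : Set V := {y | y = x ∨ G.Adj x y}

/-- `C` separates every pair of distinct vertices. -/
def IsSeparating {V : Type*} (G : SimpleGraph V) (C : Set V) : Prop :=
  ∀ x y : V, x ≠ y → _root_.ball G x ∩ C ≠ _root_.ball G y ∩ C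

/-- `C` is an identifying code of `G`. -/
def IsIdCode {V : Type*} (G : SimpleGraph V) (C : Set V) : Prop :=
  (∀ x : V, (_root_.ball G x ∩ C).Nonempty) ∧ IsSeparating G C

/-- A graph is twin-free if distinct vertices have distinct closed neighborhoods. -/
def TwinFree {V : Type*} (G : SimpleGraph V) : Prop :=
  ∀ x y : V, _root_.ball G x = _root_.ball G y → x = y

/-- The minimum size of an identifying code. -/
noncomputable def gammaID {V : Type*} (G : SimpleGraph V) : ℕ :=
  sInf {n | ∃ C : Set V, IsIdCode G C ∧ C.ncard = n}

/-- The minimum size of a separating set. -/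
noncomputable def gammaS {V : Type*} (G : SimpleGraph V) : ℕ :=
  sInf {n | ∃ C : Set V, IsSeparating G C ∧ C.ncard = n}

lemma mem_ball_iff {V : Type*} (G : SimpleGraph V) (x z : V) :
    z ∈ _root_.ball G x ↔ z = x ∨ G.Adj x z := Iff.rfl

lemma mem_ball_comm {V : Type*} (G : SimpleGraph V) (x z : V) :
    z ∈ _root_.ball G x ↔ x ∈ _root_.ball G z := by
  simp only [mem_ball_iff]
  constructor
  · rintro (rfl | h)
    · exact Or.inl rfl
    · exact Or.inr h.symm
  · rintro (rfl | h)
    · exact Or.inl rfl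
    · exact Or.inr h.symm

lemma self_mem_ball {V : Type*} (G : SimpleGraph V) (x : V) : x ∈ _root_.ball G x := Or.inl rfl

open scoped Classical

/-- Extraction lemma: if `v` is non-isolated and `V \ {v}` is not an identifying code of a
twin-free graph, then there are distinct non-isolated `x, y` whose balls differ exactly at `v`. -/
lemma extract {V : Type*} (G : SimpleGraph V) (hTF : TwinFree G) (v : V)
    (hv : ∃ w, G.Adj v w) (h : ¬ IsIdCode G ({v}ᶜ : Set V)) :
    ∃ x y : V, x ≠ y ∧ (∃ w, G.Adj x w) ∧ (∃ w, G.Adj y w) ∧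
      ∀ z, ((if z ∈ _root_.ball G x then (1 : ZMod 2) else 0) + (if z ∈ _root_.ball G y then 1 else 0))
          = if z = v then 1 else 0 := by
  classical
  rw [IsIdCode, not_and_or] at h
  rcases h with h | h
  · -- nonemptiness failure : impossible since v is non-isolated
    push_neg at h
    obtain ⟨x, hx⟩ := h
    have hxv : x = v := by
      have : x ∈ _root_.ball G x ∩ ({v}ᶜ : Set V) ∨ x = v := by
        by_cases hxv : x = v
        · exact Or.inr hxv
        · exact Or.inl ⟨self_mem_ball G x, hxv⟩
      rcases this with h' | h'
      · rw [hx] at h'; exact absurd h' (Set.notMem_empty x)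
      · exact h'
    subst hxv
    obtain ⟨w, hw⟩ := hv
    have hwv : w ≠ x := fun hh => G.irrefl (hh ▸ hw)
    have : w ∈ _root_.ball G x ∩ ({x}ᶜ : Set V) := ⟨Or.inr hw, hwv⟩
    rw [hx] at this
    exact absurd this (Set.notMem_empty w)
  · -- separation failure
    rw [IsSeparating] at h
    push_neg at h
    obtain ⟨x, y, hxy, hsep⟩ := h
    have hne : _root_.ball G x ≠ _root_.ball G y := fun he => hxy (hTF x y he)
    have key : ∀ z, z ≠ v → (z ∈ _root_.ball G x ↔ z ∈ _root_.ball G y) := by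
      intro z hz
      constructor
      · intro hzx
        have : z ∈ _root_.ball G x ∩ ({v}ᶜ : Set V) := ⟨hzx, hz⟩
        rw [hsep] at this; exact this.1
      · intro hzy
        have : z ∈ _root_.ball G y ∩ ({v}ᶜ : Set V) := ⟨hzy, hz⟩
        rw [← hsep] at this; exact this.1
    have hdiff : ¬ (v ∈ _root_.ball G x ↔ v ∈ _root_.ball G y) := by
      intro hiff
      apply hne
      ext z
      by_cases hz : z = v
      · subst hz; exact hiff
      · exact key z hz
    -- main construction for a fixed orientation
    have main : ∀ a b : V, a ≠ b → _root_.ball G a ≠ _root_.ball G b →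
        (∀ z, z ≠ v → (z ∈ _root_.ball G a ↔ z ∈ _root_.ball G b)) →
        v ∈ _root_.ball G a → v ∉ _root_.ball G b →
        ∃ x y : V, x ≠ y ∧ (∃ w, G.Adj x w) ∧ (∃ w, G.Adj y w) ∧
        ∀ z, ((if z ∈ _root_.ball G x then (1 : ZMod 2) else 0) + (if z ∈ _root_.ball G y then 1 else 0))
            = if z = v then 1 else 0 := by
      intro a b hab hballs hk hva hvb
      have hbv : b ≠ v := fun hh => hvb (hh ▸ self_mem_ball G b)
      have hba : b ∈ _root_.ball G a := (hk b hbv).mpr (self_mem_ball G b)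
      have hvna : v ≠ a := by
        intro hh
        subst hh
        exact hvb ((mem_ball_comm G v b).mp hba)
      have hadj_av : G.Adj a v := by
        rcases hva with h' | h'
        · exact absurd h' hvna
        · exact h'
      have hadj_ab : G.Adj a b := by
        rcases hba with h' | h'
        · exact absurd h'.symm hab
        · exact h'
      refine ⟨a, b, hab, ⟨v, hadj_av⟩, ⟨a, hadj_ab.symm⟩, ?_⟩
      intro z
      by_cases hz : z = v
      · subst hz
        rw [if_pos hva, if_neg hvb, if_pos rfl, add_zero]
      · rw [if_neg hz]
        by_cases hza : z ∈ _root_.ball G a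
        · rw [if_pos hza, if_pos ((hk z hz).mp hza)]; decide
        · rw [if_neg hza, if_neg (fun hzb => hza ((hk z hz).mpr hzb))]; decide
    by_cases hva : v ∈ _root_.ball G x
    · have hvy : v ∉ _root_.ball G y := fun hvy => hdiff ⟨fun _ => hvy, fun _ => hva⟩
      exact main x y hxy hne key hva hvy
    · have hvy : v ∈ _root_.ball G y := by
        by_contra hvy
        exact hdiff ⟨fun hh => absurd hh hva, fun hh => absurd hh hvy⟩
      exact main y x (Ne.symm hxy) (Ne.symm hne)
        (fun z hz => (key z hz).symm) hvy hva

theorem stmt0 {V : Type*} [Fintype V] (G : SimpleGraph V) (hTF : TwinFree G)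
    (hedge : ∃ x y : V, G.Adj x y) :
    ∃ C : Set V, IsIdCode G C ∧ C.ncard ≤ Fintype.card V - 1 := by
  classical
  by_cases H : ∃ v : V, (∃ w, G.Adj v w) ∧ IsIdCode G ({v}ᶜ : Set V)
  · obtain ⟨v, -, hv⟩ := H
    refine ⟨({v}ᶜ : Set V), hv, le_of_eq ?_⟩
    have h2 := Set.ncard_add_ncard_compl ({v} : Set V) (Set.finite_singleton v)
      (Set.toFinite _)
    rw [Set.ncard_singleton, Nat.card_eq_fintype_card] at h2
    omega
  · exfalso
    push_neg at H
    -- choice of the pair for each non-isolated vertex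
    have hch : ∀ v : V, ∃ x y : V, (∃ w, G.Adj v w) →
        (x ≠ y ∧ (∃ w, G.Adj x w) ∧ (∃ w, G.Adj y w) ∧
        ∀ z, ((if z ∈ _root_.ball G x then (1 : ZMod 2) else 0) + (if z ∈ _root_.ball G y then 1 else 0))
            = if z = v then 1 else 0) := by
      intro v
      by_cases hv : ∃ w, G.Adj v w
      · obtain ⟨x, y, h1, h2, h3, h4⟩ := extract G hTF v hv (H v hv)
        exact ⟨x, y, fun _ => ⟨h1, h2, h3, h4⟩⟩
      · exact ⟨v, v, fun hh => absurd hh hv⟩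
    choose xx yy hh using hch
    set NI : Finset V := Finset.univ.filter (fun v => ∃ w, G.Adj v w) with hNI
    have memNI : ∀ v : V, v ∈ NI ↔ ∃ w, G.Adj v w := by
      intro v; simp [hNI]
    set row : V → V → ZMod 2 := fun a z => if z ∈ _root_.ball G a then 1 else 0 with hrow
    have hrs : ∀ a z, row a z = row z a := by
      intro a z
      simp only [hrow]
      exact if_congr (mem_ball_comm G a z) rfl rfl
    have hkey : ∀ v ∈ NI, ∀ z, row (xx v) z + row (yy v) z = if z = v then 1 else 0 := by
      intro v hv z
      exact (hh v ((memNI v).mp hv)).2.2.2 z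
    have hxNI : ∀ v ∈ NI, xx v ∈ NI := by
      intro v hv; exact (memNI _).mpr (hh v ((memNI v).mp hv)).2.1
    have hyNI : ∀ v ∈ NI, yy v ∈ NI := by
      intro v hv; exact (memNI _).mpr (hh v ((memNI v).mp hv)).2.2.1
    have hxyne : ∀ v ∈ NI, xx v ≠ yy v := by
      intro v hv; exact (hh v ((memNI v).mp hv)).1
    set P : V → V → ZMod 2 :=
      fun v w => (if w = xx v then 1 else 0) + (if w = yy v then 1 else 0) with hP
    -- symmetry of P on NI
    have hPsymm : ∀ v ∈ NI, ∀ w ∈ NI, P v w = P w v := by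
      intro v hv w hw
      have e1 : ∀ u w', w' ∈ NI → ((if u = w' then (1 : ZMod 2) else 0)
          = row (xx w') u + row (yy w') u) := by
        intro u w' hw'
        rw [hkey w' hw' u]
      have expand : ∀ p q, p ∈ NI → q ∈ NI → P p q =
          row (xx q) (xx p) + row (yy q) (xx p) + (row (xx q) (yy p) + row (yy q) (yy p)) := by
        intro p q hp hq
        simp only [hP]
        rw [show (if q = xx p then (1 : ZMod 2) else 0) = (if xx p = q then (1 : ZMod 2) else 0)
            from if_congr eq_comm rfl rfl,
          show (if q = yy p then (1 : ZMod 2) else 0) = (if yy p = q then (1 : ZMod 2) else 0)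
            from if_congr eq_comm rfl rfl,
          e1 (xx p) q hq, e1 (yy p) q hq]
      rw [expand v w hv hw, expand w v hw hv,
        hrs (xx w) (xx v), hrs (yy w) (xx v), hrs (xx w) (yy v), hrs (yy w) (yy v)]
      ring
    -- the column sums of P over NI vanish
    have ht : ∀ w, (∑ v ∈ NI, P v w) = 0 := by
      intro w
      by_cases hw : w ∈ NI
      · have : (∑ v ∈ NI, P v w) = ∑ v ∈ NI, P w v :=
          Finset.sum_congr rfl (fun v hv => hPsymm v hv w hw)
        rw [this]
        simp only [hP]
        rw [Finset.sum_add_distrib, Finset.sum_ite_eq' NI (xx w) (fun _ => (1 : ZMod 2)),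
          Finset.sum_ite_eq' NI (yy w) (fun _ => (1 : ZMod 2)),
          if_pos (hxNI w hw), if_pos (hyNI w hw)]
        decide
      · apply Finset.sum_eq_zero
        intro v hv
        simp only [hP]
        rw [if_neg (fun hh : w = xx v => hw (hh ▸ hxNI v hv)),
          if_neg (fun hh : w = yy v => hw (hh ▸ hyNI v hv)), add_zero]
    -- final contradiction at an endpoint of the edge
    obtain ⟨a, b, hab⟩ := hedge
    have ha : a ∈ NI := (memNI a).mpr ⟨b, hab⟩
    have S1 : (∑ v ∈ NI, (row (xx v) a + row (yy v) a)) = 1 := by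
      rw [Finset.sum_congr rfl (fun v hv => hkey v hv a)]
      rw [Finset.sum_ite_eq NI a (fun _ => (1 : ZMod 2)), if_pos ha]
    have S2 : (∑ v ∈ NI, (row (xx v) a + row (yy v) a)) = 0 := by
      have expand : ∀ v, row (xx v) a + row (yy v) a
          = ∑ z ∈ Finset.univ, P v z * row z a := by
        intro v
        simp only [hP]
        have : ∀ z : V, ((if z = xx v then (1 : ZMod 2) else 0)
              + (if z = yy v then 1 else 0)) * row z a
            = (if z = xx v then row z a else 0) + (if z = yy v then row z a else 0) := by
          intro z
          rw [add_mul, boole_mul, boole_mul]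
        rw [Finset.sum_congr rfl (fun z _ => this z), Finset.sum_add_distrib,
          Finset.sum_ite_eq' Finset.univ (xx v) (fun z => row z a),
          Finset.sum_ite_eq' Finset.univ (yy v) (fun z => row z a),
          if_pos (Finset.mem_univ _), if_pos (Finset.mem_univ _)]
      rw [Finset.sum_congr rfl (fun v _ => expand v), Finset.sum_comm]
      apply Finset.sum_eq_zero
      intro z _
      rw [← Finset.sum_mul, ht z, zero_mul]
    rw [S1] at S2
    exact one_ne_zero S2
end

section
/- Let G be a twin-free graph, v ∈ V(G), and suppose x, y are twins in G−v. If G−x (or G−y) has a pair of twins, then v is one of the vertices of that twin pair. -/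
open SimpleGraph

lemma key_stmt3 {V : Type*} (G : SimpleGraph V)
    (hTF : TwinFree G) (v x y : V)
    (hxy : x ≠ y) (hxv : x ≠ v) (hyv : y ≠ v)
    (htwins : _root_.ball (G.induce ({v}ᶜ : Set V)) ⟨x, hxv⟩ = _root_.ball (G.induce ({v}ᶜ : Set V)) ⟨y, hyv⟩) :
    ∀ z t : ({x}ᶜ : Set V), z ≠ t →
      _root_.ball (G.induce ({x}ᶜ : Set V)) z = _root_.ball (G.induce ({x}ᶜ : Set V)) t →
      v = (z : V) ∨ v = (t : V) := by
  intro z t hzt hb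
  by_contra h
  push_neg at h
  obtain ⟨hvz, hvt⟩ := h
  have twinP : ∀ w : V, w ≠ v → ((w = x ∨ G.Adj x w) ↔ (w = y ∨ G.Adj y w)) := by
    intro w hw
    have := Set.ext_iff.mp htwins ⟨w, hw⟩
    simpa [_root_.ball, Subtype.ext_iff] using this
  have twinQ : ∀ w : V, w ≠ x → ((w = ↑z ∨ G.Adj ↑z w) ↔ (w = ↑t ∨ G.Adj ↑t w)) := by
    intro w hw
    have := Set.ext_iff.mp hb ⟨w, hw⟩
    simpa [_root_.ball, Subtype.ext_iff] using this
  have hzx : (z : V) ≠ x := z.2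
  have htx : (t : V) ≠ x := t.2
  have hAx : G.Adj x ↑z ↔ G.Adj x ↑t := by
    have h1 := twinP ↑z (Ne.symm hvz)
    have h2 := twinP ↑t (Ne.symm hvt)
    have hy : y ≠ x := hxy.symm
    have h3 := twinQ y hy
    constructor
    · intro ha
      rcases h1.mp (Or.inr ha) with h | h
      · have : y = ↑z ∨ G.Adj ↑z y := Or.inl h.symm
        rcases h3.mp this with h' | h'
        · rcases h2.mpr (Or.inl h'.symm) with h'' | h''
          · exact absurd h'' htx
          · exact h''
        · rcases h2.mpr (Or.inr h'.symm) with h'' | h''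
          · exact absurd h'' htx
          · exact h''
      · rcases h3.mp (Or.inr h.symm) with h' | h'
        · rcases h2.mpr (Or.inl h'.symm) with h'' | h''
          · exact absurd h'' htx
          · exact h''
        · rcases h2.mpr (Or.inr h'.symm) with h'' | h''
          · exact absurd h'' htx
          · exact h''
    · intro ha
      rcases h2.mp (Or.inr ha) with h | h
      · have : y = ↑t ∨ G.Adj ↑t y := Or.inl h.symm
        rcases h3.mpr this with h' | h'
        · rcases h1.mpr (Or.inl h'.symm) with h'' | h''
          · exact absurd h'' hzx
          · exact h''
        · rcases h1.mpr (Or.inr h'.symm) with h'' | h''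
          · exact absurd h'' hzx
          · exact h''
      · rcases h3.mpr (Or.inr h.symm) with h' | h'
        · rcases h1.mpr (Or.inl h'.symm) with h'' | h''
          · exact absurd h'' hzx
          · exact h''
        · rcases h1.mpr (Or.inr h'.symm) with h'' | h''
          · exact absurd h'' hzx
          · exact h''
  have hball : _root_.ball G ↑z = _root_.ball G ↑t := by
    ext w
    by_cases hw : w = x
    · subst hw
      simp only [_root_.ball, Set.mem_setOf_eq]
      constructor
      · rintro (h | h)
        · exact absurd h.symm hzx
        · exact Or.inr (hAx.mp h.symm).symm
      · rintro (h | h)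
        · exact absurd h.symm htx
        · exact Or.inr (hAx.mpr h.symm).symm
    · exact twinQ w hw
  have := hTF _ _ hball
  exact hzt (Subtype.ext this)

theorem stmt3 {V : Type*} (G : SimpleGraph V) (hTF : TwinFree G) (v x y : V)
    (hxy : x ≠ y) (hxv : x ≠ v) (hyv : y ≠ v)
    (htwins : _root_.ball (G.induce ({v}ᶜ : Set V)) ⟨x, hxv⟩ = _root_.ball (G.induce ({v}ᶜ : Set V)) ⟨y, hyv⟩) :
    (∀ z t : ({x}ᶜ : Set V), z ≠ t →
      _root_.ball (G.induce ({x}ᶜ : Set V)) z = _root_.ball (G.induce ({x}ᶜ : Set V)) t →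
      v = (z : V) ∨ v = (t : V)) ∧
    (∀ z t : ({y}ᶜ : Set V), z ≠ t →
      _root_.ball (G.induce ({y}ᶜ : Set V)) z = _root_.ball (G.induce ({y}ᶜ : Set V)) t →
      v = (z : V) ∨ v = (t : V)) :=
  ⟨key_stmt3 G hTF v x y hxy hxv hyv htwins,
   key_stmt3 G hTF v y x hxy.symm hyv hxv htwins.symm⟩
end

section
/- Let G be a connected twin-free graph and I a 4-independent set of vertices such that for every x ∈ I, the set V(G)∖{x} is an identifying code of G. Then V(G)∖I is an identifying code of G. -/
open SimpleGraph

theorem stmt4 {V : Type*} (G : SimpleGraph V) (hconn : G.Connected) (hTF : TwinFree G)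
    (I : Set V) (hind : ∀ x ∈ I, ∀ y ∈ I, x ≠ y → 4 ≤ G.dist x y)
    (hcode : ∀ x ∈ I, IsIdCode G ({x}ᶜ : Set V)) :
    IsIdCode G (Iᶜ : Set V) := by

  -- distance ≤ 1 from ball membership
  have hd : ∀ p q : V, p ∈ _root_.ball G q → G.dist q p ≤ 1 := by
    intro p q hp
    rcases hp with rfl | h
    · rw [SimpleGraph.dist_self]; omega
    · exact le_of_eq ((dist_eq_one_iff_adj).2 h)
  have hd' : ∀ p q : V, p ∈ _root_.ball G q → G.dist p q ≤ 1 := by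
    intro p q hp; rw [SimpleGraph.dist_comm]; exact hd p q hp
  have htri : ∀ a b c : V, G.dist a c ≤ G.dist a b + G.dist b c := fun a b c => hconn.dist_triangle
  have cover : ∀ x : V, (_root_.ball G x ∩ Iᶜ).Nonempty := by
    intro x
    by_cases hx : x ∈ I
    · obtain ⟨y, hy, hyx⟩ := (hcode x hx).1 x
      refine ⟨y, hy, fun hyI => ?_⟩
      have hyx' : y ≠ x := hyx
      have h4 := hind x hx y hyI (Ne.symm hyx')
      exact absurd (hd y x hy) (by omega)
    · exact ⟨x, Or.inl rfl, hx⟩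
  refine ⟨cover, ?_⟩
  intro x y hxy heq
  -- sym diff elements are in I
  have hSx : ∀ a, a ∈ _root_.ball G x → a ∉ _root_.ball G y → a ∈ I := by
    intro a ha hay
    by_contra haI
    have : a ∈ _root_.ball G y ∩ Iᶜ := by rw [← heq]; exact ⟨ha, haI⟩
    exact hay this.1
  have hSy : ∀ a, a ∈ _root_.ball G y → a ∉ _root_.ball G x → a ∈ I := by
    intro a ha hax
    by_contra haI
    have : a ∈ _root_.ball G x ∩ Iᶜ := by rw [heq]; exact ⟨ha, haI⟩
    exact hax this.1
  -- dist x y ≤ 2 via a common Iᶜ vertex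
  obtain ⟨u, hux, huI⟩ := cover x
  have huy : u ∈ _root_.ball G y := by
    have : u ∈ _root_.ball G y ∩ Iᶜ := by rw [← heq]; exact ⟨hux, huI⟩
    exact this.1
  have dxy : G.dist x y ≤ 2 := by
    have := htri x u y
    have h1 := hd u x hux
    have h2 := hd' u y huy
    omega
  -- find z in symmetric difference (twin-free)
  have hne : _root_.ball G x ≠ _root_.ball G y := fun h => hxy (hTF x y h)
  have : ∃ z, (z ∈ _root_.ball G x ∧ z ∉ _root_.ball G y) ∨ (z ∈ _root_.ball G y ∧ z ∉ _root_.ball G x) := by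
    by_contra hc
    push_neg at hc
    exact hne (Set.ext fun a => ⟨(hc a).1, (hc a).2⟩)
  obtain ⟨z, hz⟩ := this
  have hzI : z ∈ I := by
    rcases hz with ⟨h1, h2⟩ | ⟨h1, h2⟩
    · exact hSx z h1 h2
    · exact hSy z h1 h2
  -- use hcode z to find a second sym-diff element w ≠ z
  have hsep := (hcode z hzI).2 x y hxy
  have : ∃ w, w ≠ z ∧ ((w ∈ _root_.ball G x ∧ w ∉ _root_.ball G y) ∨ (w ∈ _root_.ball G y ∧ w ∉ _root_.ball G x)) := by
    by_contra hc
    push_neg at hc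
    apply hsep
    ext a
    simp only [Set.mem_inter_iff, Set.mem_compl_iff, Set.mem_singleton_iff]
    constructor
    · rintro ⟨ha, haz⟩
      exact ⟨(hc a haz).1 ha, haz⟩
    · rintro ⟨ha, haz⟩
      exact ⟨(hc a haz).2 ha, haz⟩
  obtain ⟨w, hwz, hw⟩ := this
  have hwI : w ∈ I := by
    rcases hw with ⟨h1, h2⟩ | ⟨h1, h2⟩
    · exact hSx w h1 h2
    · exact hSy w h1 h2
  have h4 := hind z hzI w hwI (Ne.symm hwz)
  -- now show dist z w ≤ 3
  have key : G.dist z w ≤ 3 := by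
    rcases hz with ⟨hzx, hzy⟩ | ⟨hzy, hzx⟩ <;> rcases hw with ⟨hwx, hwy⟩ | ⟨hwy, hwx⟩
    · have := htri z x w
      have h1 := hd' z x hzx; have h2 := hd w x hwx; omega
    · -- z ∈ ball x \ ball y, w ∈ ball y \ ball x
      rcases hzx with rfl | hadj
      · -- z = x
        have := htri z y w
        have h2 := hd w y hwy; omega
      · rcases hwy with rfl | hadjw
        · -- w = y
          have := htri z x w
          have h1 := hd' z x (Or.inr hadj); omega
        · -- z ≠ x adjacent, w ≠ y adjacent; then x ∉ I
          have hxI : x ∉ I := by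
            intro hxI
            have := hind x hxI z hzI (by rintro rfl; exact G.loopless.irrefl x hadj)
            have := hd z x (Or.inr hadj); omega
          have hxy' : x ∈ _root_.ball G y := by
            have : x ∈ _root_.ball G y ∩ Iᶜ := by rw [← heq]; exact ⟨Or.inl rfl, hxI⟩
            exact this.1
          have d1 : G.dist z x ≤ 1 := hd' z x (Or.inr hadj)
          have d2 : G.dist x y ≤ 1 := by rw [SimpleGraph.dist_comm]; exact hd x y hxy'
          have d3 : G.dist y w ≤ 1 := hd w y (Or.inr hadjw)
          have t1 := htri z x w
          have t2 := htri x y w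
          omega
    · -- symmetric: z ∈ ball y \ ball x, w ∈ ball x \ ball y
      rcases hzy with rfl | hadj
      · have := htri z x w
        have h2 := hd w x hwx; rw [SimpleGraph.dist_comm] at dxy; omega
      · rcases hwx with rfl | hadjw
        · have := htri z y w
          have h1 := hd' z y (Or.inr hadj); rw [SimpleGraph.dist_comm] at dxy; omega
        · have hyI : y ∉ I := by
            intro hyI
            have := hind y hyI z hzI (by rintro rfl; exact G.loopless.irrefl y hadj)
            have := hd z y (Or.inr hadj); omega
          have hyx' : y ∈ _root_.ball G x := by
            have : y ∈ _root_.ball G x ∩ Iᶜ := by rw [heq]; exact ⟨Or.inl rfl, hyI⟩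
            exact this.1
          have d1 : G.dist z y ≤ 1 := hd' z y (Or.inr hadj)
          have d2 : G.dist y x ≤ 1 := by rw [SimpleGraph.dist_comm]; exact hd y x hyx'
          have d3 : G.dist x w ≤ 1 := hd w x (Or.inr hadjw)
          have t1 := htri z y w
          have t2 := htri y x w
          omega
    · have := htri z y w
      have h1 := hd' z y hzy; have h2 := hd w y hwy; omega
  omega
end

section
/- For every k ≥ 1, the graph A_k is twin-free, and every separating set of A_k has size at least 2k−1; moreover the only separating sets of size exactly 2k−1 are B_1(x_k) and B_1(x_{k+1}). -/
open SimpleGraph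

/-- The graph `A_k` on vertices `x_1,…,x_{2k}` (indexed `0,…,2k-1`):
`x_i` adjacent to `x_j` iff `i ≠ j` and `|i - j| ≤ k - 1`. -/
def Agraph (k : ℕ) : SimpleGraph (Fin (2 * k)) where
  Adj i j := i ≠ j ∧ ((i : ℤ) - (j : ℤ)).natAbs ≤ k - 1
  symm := by
    constructor
    intro i j h
    refine ⟨h.1.symm, ?_⟩
    have : ((j : ℤ) - (i : ℤ)).natAbs = ((i : ℤ) - (j : ℤ)).natAbs := by
      rw [← Int.natAbs_neg]; ring_nf
    omega
  loopless := by constructor; intro i h; exact h.1 rfl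

/-- The join of two graphs. -/
def joinG {α β : Type*} (G₁ : SimpleGraph α) (G₂ : SimpleGraph β) : SimpleGraph (α ⊕ β) where
  Adj x y := match x, y with
    | Sum.inl a, Sum.inl b => G₁.Adj a b
    | Sum.inr a, Sum.inr b => G₂.Adj a b
    | _, _ => True
  symm := by constructor; rintro (a | a) (b | b) h <;> first | exact h.symm | trivial
  loopless := by
    constructor
    rintro (a | a) h
    · exact G₁.loopless.irrefl _ h
    · exact G₂.loopless.irrefl _ h

/-- The star `K_{1,t}`: vertex `0` is the center, adjacent to all other vertices. -/
def starGraph (t : ℕ) : SimpleGraph (Fin (t + 1)) where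
  Adj i j := i ≠ j ∧ (i = 0 ∨ j = 0)
  symm := by constructor; rintro i j ⟨h1, h2⟩; exact ⟨h1.symm, h2.symm⟩
  loopless := by constructor; rintro i ⟨h1, _⟩; exact h1 rfl


lemma mem_ball_iff_s6 {k : ℕ} (x y : Fin (2*k)) :
    y ∈ _root_.ball (Agraph k) x ↔ ((y:ℕ) ≤ (x:ℕ) + (k-1) ∧ (x:ℕ) ≤ (y:ℕ) + (k-1)) := by
  have hx : (x:ℤ) = ((x:ℕ):ℤ) := rfl
  have hy : (y:ℤ) = ((y:ℕ):ℤ) := rfl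
  constructor
  · rintro (rfl | ⟨hne, h⟩)
    · omega
    · rw [hx, hy] at h; omega
  · intro h
    by_cases hxy : y = x
    · exact Or.inl hxy
    · refine Or.inr ⟨fun he => hxy he.symm, ?_⟩
      rw [hx, hy]
      have : (x:ℕ) ≠ (y:ℕ) := fun e => hxy (Fin.ext e.symm)
      omega

lemma not_twin {k : ℕ} (hk : 1 ≤ k) (x y : Fin (2*k)) (h : (x:ℕ) < (y:ℕ)) :
    _root_.ball (Agraph k) x ≠ _root_.ball (Agraph k) y := by
  intro he
  have hy2 : (y:ℕ) < 2*k := y.isLt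
  by_cases hyk : k ≤ (y:ℕ)
  · set w : Fin (2*k) := ⟨(y:ℕ) - k, by omega⟩ with hw
    have h1 : w ∈ _root_.ball (Agraph k) x := (mem_ball_iff_s6 x w).2 (by simp [hw]; omega)
    rw [he] at h1
    have := (mem_ball_iff_s6 y w).1 h1
    simp [hw] at this
    omega
  · set w : Fin (2*k) := ⟨(x:ℕ) + k, by omega⟩ with hw
    have h1 : w ∈ _root_.ball (Agraph k) y := (mem_ball_iff_s6 y w).2 (by simp [hw]; omega)
    rw [← he] at h1
    have := (mem_ball_iff_s6 x w).1 h1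
    simp [hw] at this
    omega

lemma force_mem {k : ℕ} {S : Set (Fin (2*k))} (hS : IsSeparating (Agraph k) S)
    (a b z : Fin (2*k)) (hab : a ≠ b)
    (h : ∀ w, w = z ∨ (w ∈ _root_.ball (Agraph k) a ↔ w ∈ _root_.ball (Agraph k) b)) : z ∈ S := by
  by_contra hz
  apply hS a b hab
  ext w
  simp only [Set.mem_inter_iff]
  rcases h w with rfl | hiff
  · constructor <;> rintro ⟨_, hw⟩ <;> exact absurd hw hz
  · rw [hiff]

lemma force_mem2 {k : ℕ} {S : Set (Fin (2*k))} (hS : IsSeparating (Agraph k) S)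
    (a b z₁ z₂ : Fin (2*k)) (hab : a ≠ b)
    (h : ∀ w, w = z₁ ∨ w = z₂ ∨ (w ∈ _root_.ball (Agraph k) a ↔ w ∈ _root_.ball (Agraph k) b)) :
    z₁ ∈ S ∨ z₂ ∈ S := by
  by_contra hz
  push_neg at hz
  apply hS a b hab
  ext w
  simp only [Set.mem_inter_iff]
  rcases h w with rfl | rfl | hiff
  · constructor <;> rintro ⟨_, hw⟩ <;> exact absurd hw hz.1
  · constructor <;> rintro ⟨_, hw⟩ <;> exact absurd hw hz.2
  · rw [hiff]

lemma ncard_compl_singleton {k : ℕ} (a : Fin (2*k)) :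
    ({a}ᶜ : Set (Fin (2*k))).ncard = 2*k - 1 := by
  rw [Set.compl_eq_univ_diff, Set.ncard_diff_singleton_of_mem (Set.mem_univ a),
    Set.ncard_univ, Nat.card_eq_fintype_card, Fintype.card_fin]

lemma ball_km1 {k : ℕ} (hk : 1 ≤ k) :
    _root_.ball (Agraph k) ⟨k - 1, (by omega : k - 1 < 2 * k + 0)⟩ = ({⟨2*k-1, by omega⟩} : Set (Fin (2*k)))ᶜ := by
  ext w
  rw [mem_ball_iff_s6]
  have hw := w.isLt
  simp only [Set.mem_compl_iff, Set.mem_singleton_iff, Fin.ext_iff]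
  omega

lemma ball_k {k : ℕ} (hk : 1 ≤ k) :
    _root_.ball (Agraph k) ⟨k, (by omega : k < 2 * k + 0)⟩ = ({⟨0, by omega⟩} : Set (Fin (2*k)))ᶜ := by
  ext w
  rw [mem_ball_iff_s6]
  have hw := w.isLt
  simp only [Set.mem_compl_iff, Set.mem_singleton_iff, Fin.ext_iff]
  omega

lemma key {k : ℕ} (hk : 1 ≤ k) {S : Set (Fin (2*k))} (hS : IsSeparating (Agraph k) S) :
    (({⟨2*k-1, by omega⟩} : Set (Fin (2*k)))ᶜ ⊆ S) ∨
    (({⟨0, by omega⟩} : Set (Fin (2*k)))ᶜ ⊆ S) := by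
  -- every middle vertex is in S
  have claim1 : ∀ j : Fin (2*k), 1 ≤ (j:ℕ) → (j:ℕ) ≤ 2*k - 2 → j ∈ S := by
    intro j hj1 hj2
    have hjlt := j.isLt
    by_cases hjk : (j:ℕ) ≤ k - 1
    · refine force_mem hS ⟨(j:ℕ) + k - 1, by omega⟩ ⟨(j:ℕ) + k, by omega⟩ j
        (by simp only [ne_eq, Fin.ext_iff]; omega) ?_
      intro w
      by_cases hwj : w = j
      · exact Or.inl hwj
      · refine Or.inr ?_
        rw [mem_ball_iff_s6, mem_ball_iff_s6]
        have hw := w.isLt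
        have : (w:ℕ) ≠ (j:ℕ) := fun e => hwj (Fin.ext e)
        simp only
        omega
    · refine force_mem hS ⟨(j:ℕ) - k, by omega⟩ ⟨(j:ℕ) - k + 1, by omega⟩ j
        (by simp only [ne_eq, Fin.ext_iff]; omega) ?_
      intro w
      by_cases hwj : w = j
      · exact Or.inl hwj
      · refine Or.inr ?_
        rw [mem_ball_iff_s6, mem_ball_iff_s6]
        have hw := w.isLt
        have : (w:ℕ) ≠ (j:ℕ) := fun e => hwj (Fin.ext e)
        simp only
        omega
  have claim2 : (⟨0, by omega⟩ : Fin (2*k)) ∈ S ∨ (⟨2*k-1, by omega⟩ : Fin (2*k)) ∈ S := by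
    refine force_mem2 hS ⟨k - 1, (by omega : k - 1 < 2 * k + 0)⟩ ⟨k, (by omega : k < 2 * k + 0)⟩ _ _
      (by simp only [ne_eq, Fin.ext_iff]; omega) ?_
    intro w
    by_cases h1 : w = (⟨0, by omega⟩ : Fin (2*k))
    · exact Or.inl h1
    by_cases h2 : w = (⟨2*k-1, by omega⟩ : Fin (2*k))
    · exact Or.inr (Or.inl h2)
    refine Or.inr (Or.inr ?_)
    rw [mem_ball_iff_s6, mem_ball_iff_s6]
    have hw := w.isLt
    have e1 : (w:ℕ) ≠ 0 := fun e => h1 (Fin.ext e)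
    have e2 : (w:ℕ) ≠ 2*k-1 := fun e => h2 (Fin.ext e)
    simp only
    omega
  rcases claim2 with h0 | hL
  · left
    intro w hw
    simp only [Set.mem_compl_iff, Set.mem_singleton_iff, Fin.ext_iff] at hw
    have hwlt := w.isLt
    by_cases h0' : (w:ℕ) = 0
    · have : w = (⟨0, by omega⟩ : Fin (2*k)) := Fin.ext h0'
      rw [this]; exact h0
    · exact claim1 w (by omega) (by omega)
  · right
    intro w hw
    simp only [Set.mem_compl_iff, Set.mem_singleton_iff, Fin.ext_iff] at hw
    have hwlt := w.isLt
    by_cases hL' : (w:ℕ) = 2*k - 1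
    · have : w = (⟨2*k-1, by omega⟩ : Fin (2*k)) := Fin.ext hL'
      rw [this]; exact hL
    · exact claim1 w (by omega) (by omega)

theorem stmt6 (k : ℕ) (hk : 1 ≤ k) :
    TwinFree (Agraph k) ∧
    (∀ S : Set (Fin (2 * k)), IsSeparating (Agraph k) S → 2 * k - 1 ≤ S.ncard) ∧
    (∀ S : Set (Fin (2 * k)), IsSeparating (Agraph k) S → S.ncard = 2 * k - 1 →
      S = _root_.ball (Agraph k) ⟨k - 1, by omega⟩ ∨ S = _root_.ball (Agraph k) ⟨k, by omega⟩) := by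
  refine ⟨?_, ?_, ?_⟩
  · intro x y h
    rcases lt_trichotomy (x:ℕ) (y:ℕ) with hlt | heq | hgt
    · exact absurd h (not_twin hk x y hlt)
    · exact Fin.ext heq
    · exact absurd h.symm (not_twin hk y x hgt)
  · intro S hS
    rcases key hk hS with h | h
    · calc 2*k - 1 = ({⟨2*k-1, by omega⟩} : Set (Fin (2*k)))ᶜ.ncard :=
            (ncard_compl_singleton _).symm
        _ ≤ S.ncard := Set.ncard_le_ncard h (Set.toFinite S)
    · calc 2*k - 1 = ({⟨0, by omega⟩} : Set (Fin (2*k)))ᶜ.ncard :=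
            (ncard_compl_singleton _).symm
        _ ≤ S.ncard := Set.ncard_le_ncard h (Set.toFinite S)
  · intro S hS hcard
    rcases key hk hS with h | h
    · left
      rw [ball_km1 hk]
      exact (Set.eq_of_subset_of_ncard_le h
        (by rw [hcard, ncard_compl_singleton]) (Set.toFinite S)).symm
    · right
      rw [ball_k hk]
      exact (Set.eq_of_subset_of_ncard_le h
        (by rw [hcard, ncard_compl_singleton]) (Set.toFinite S)).symm
end

section
/- Let G be a connected twin-free graph on n ≥ 3 vertices with maximum degree Δ ≤ n−3. Then γ^ID(G) ≤ n−2. -/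
open SimpleGraph

set_option linter.unusedSectionVars false
set_option maxHeartbeats 1000000
attribute [local instance] Classical.propDecidable

namespace Stmt13

variable {V : Type*}

section Reach

variable {W : Type*} (ed : V → W × W)

/-- One step along an allowed labelled edge. -/
def Stp (T : Set V) (w w' : W) : Prop :=
  ∃ c ∈ T, (ed c = (w, w')) ∨ (ed c = (w', w))

/-- Reachability using edges with labels in `T`. -/
def Rch (T : Set V) : W → W → Prop := Relation.ReflTransGen (Stp ed T)

lemma stp_symm {T : Set V} {w w' : W} (h : Stp ed T w w') : Stp ed T w' w := by
  obtain ⟨c, hc, h | h⟩ := h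
  · exact ⟨c, hc, Or.inr h⟩
  · exact ⟨c, hc, Or.inl h⟩

lemma rch_refl {T : Set V} (w : W) : Rch ed T w w := Relation.ReflTransGen.refl

lemma rch_symm {T : Set V} {w w' : W} (h : Rch ed T w w') : Rch ed T w' w :=
  by
    haveI : Std.Symm (Stp ed T) := ⟨fun _ _ h => stp_symm ed h⟩
    exact Relation.ReflTransGen.symmetric.symm _ _ h

lemma rch_trans {T : Set V} {a b c : W} (h : Rch ed T a b) (h' : Rch ed T b c) :
    Rch ed T a c := Relation.ReflTransGen.trans h h'

lemma rch_mono {T T' : Set V} (hT : T ⊆ T') {w w' : W} (h : Rch ed T w w') :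
    Rch ed T' w w' := by
  induction h with
  | refl => exact rch_refl ed _
  | tail _ hs ih =>
      exact Relation.ReflTransGen.tail ih (by obtain ⟨c, hc, h⟩ := hs; exact ⟨c, hT hc, h⟩)

lemma rch_single {T : Set V} {c : V} (hc : c ∈ T) : Rch ed T (ed c).1 (ed c).2 :=
  Relation.ReflTransGen.single ⟨c, hc, Or.inl rfl⟩

/-- Invariance: a set of nodes respected by every allowed edge is respected by reachability. -/
lemma rch_inv {T : Set V} (U : Set W)
    (hU : ∀ c ∈ T, ((ed c).1 ∈ U ↔ (ed c).2 ∈ U)) {w w' : W}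
    (h : Rch ed T w w') : (w ∈ U ↔ w' ∈ U) := by
  induction h with
  | refl => rfl
  | tail _ hs ih =>
      obtain ⟨c, hc, h | h⟩ := hs
      · rw [ih]
        have := hU c hc; rw [h] at this; exact this
      · rw [ih]
        have := hU c hc; rw [h] at this; exact this.symm

/-- Decomposition of reachability when one edge is removed. -/
lemma rch_decomp {T : Set V} (c : V) {w w' : W} (h : Rch ed T w w') :
    Rch ed (T \ {c}) w w' ∨
    (Rch ed (T \ {c}) w (ed c).1 ∧ Rch ed (T \ {c}) (ed c).2 w') ∨
    (Rch ed (T \ {c}) w (ed c).2 ∧ Rch ed (T \ {c}) (ed c).1 w') := by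
  induction h with
  | refl => exact Or.inl (rch_refl ed _)
  | tail _ hs ih =>
      obtain ⟨c', hc', hstep⟩ := hs
      by_cases hcc : c' = c
      · subst hcc
        rcases hstep with h | h
        · -- ed c' = (b, w')
          rcases ih with ih | ⟨ih1, ih2⟩ | ⟨ih1, ih2⟩
          · refine Or.inr (Or.inl ?_)
            constructor
            · rw [h]; exact ih
            · rw [h]; exact rch_refl ed _
          · refine Or.inr (Or.inl ?_)
            constructor
            · rw [h]
              exact rch_trans ed ih1 (by rw [h]; exact rch_refl ed _)
            · rw [h]; exact rch_refl ed _
          · refine Or.inl ?_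
            have : Rch ed (T \ {c'}) w (ed c').2 := ih1
            rw [h] at this; exact this
        · -- ed c' = (w', b)
          rcases ih with ih | ⟨ih1, ih2⟩ | ⟨ih1, ih2⟩
          · refine Or.inr (Or.inr ?_)
            constructor
            · rw [h]; exact ih
            · rw [h]; exact rch_refl ed _
          · refine Or.inl ?_
            have : Rch ed (T \ {c'}) w (ed c').1 := ih1
            rw [h] at this; exact this
          · refine Or.inr (Or.inr ?_)
            constructor
            · rw [h]
              exact rch_trans ed ih1 (by rw [h]; exact rch_refl ed _)
            · rw [h]; exact rch_refl ed _
      · have hstep' : Stp ed (T \ {c}) _ _ := ⟨c', ⟨hc', hcc⟩, hstep⟩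
        rcases ih with ih | ⟨ih1, ih2⟩ | ⟨ih1, ih2⟩
        · exact Or.inl (Relation.ReflTransGen.tail ih hstep')
        · exact Or.inr (Or.inl ⟨ih1, Relation.ReflTransGen.tail ih2 hstep'⟩)
        · exact Or.inr (Or.inr ⟨ih1, Relation.ReflTransGen.tail ih2 hstep'⟩)

/-- From a nontrivial reachability, extract an edge whose both endpoints are reachable. -/
lemma rch_extract {T : Set V} {w w' : W} (h : Rch ed T w w') (hne : w ≠ w') :
    ∃ c ∈ T, Rch ed T w (ed c).1 ∧ Rch ed T w (ed c).2 := by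
  induction h using Relation.ReflTransGen.head_induction_on with
  | refl => exact absurd rfl hne
  | head hs h ih =>
      rename_i x b
      obtain ⟨c, hc, hh | hh⟩ := hs
      · refine ⟨c, hc, ?_, ?_⟩
        · rw [hh]; exact rch_refl ed _
        · rw [hh]
          exact Relation.ReflTransGen.single ⟨c, hc, Or.inl hh⟩
      · refine ⟨c, hc, ?_, ?_⟩
        · rw [hh]
          exact Relation.ReflTransGen.single ⟨c, hc, Or.inr hh⟩
        · rw [hh]; exact rch_refl ed _

end Reach

section GraphBasics

variable [Fintype V] (G : SimpleGraph V) [DecidableRel G.Adj]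

lemma mem_ball_self (x : V) : x ∈ _root_.ball G x := Or.inl rfl

lemma ball_comm {x y : V} : x ∈ _root_.ball G y ↔ y ∈ _root_.ball G x := by
  unfold _root_.ball
  constructor
  · rintro (h | h)
    · exact Or.inl h.symm
    · exact Or.inr h.symm
  · rintro (h | h)
    · exact Or.inl h.symm
    · exact Or.inr h.symm

lemma adj_of_mem_ball {x y : V} (h : y ∈ _root_.ball G x) (hne : y ≠ x) : G.Adj x y := by
  rcases h with h | h
  · exact absurd h hne
  · exact h

lemma ball_ncard (x : V) : (_root_.ball G x).ncard = G.degree x + 1 := by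
  classical
  have h : _root_.ball G x = insert x (G.neighborSet x) := by
    ext y
    simp [_root_.ball, Set.mem_insert_iff, SimpleGraph.mem_neighborSet]
  rw [h, Set.ncard_insert_of_notMem (by simp) (Set.toFinite _)]
  congr 1
  rw [← SimpleGraph.card_neighborSet_eq_degree, Set.ncard_eq_toFinset_card']
  simp [Set.toFinset_card]

lemma ball_ncard_le (hdeg : G.maxDegree ≤ Fintype.card V - 3)
    (hn : 3 ≤ Fintype.card V) (x : V) : (_root_.ball G x).ncard ≤ Fintype.card V - 2 := by
  have h1 := G.degree_le_maxDegree x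
  have := ball_ncard G x
  omega

/-- Across any cut of a connected graph there is an edge. -/
lemma cross (hconn : G.Connected) (S : Set V) (hS : S.Nonempty) (hS' : S ≠ Set.univ) :
    ∃ a b, a ∈ S ∧ b ∉ S ∧ b ∈ _root_.ball G a := by
  classical
  obtain ⟨a, ha⟩ := hS
  have : ∃ b, b ∉ S := by
    by_contra h
    push_neg at h
    exact hS' (Set.eq_univ_of_forall h)
  obtain ⟨b, hb⟩ := this
  obtain ⟨w⟩ := hconn.preconnected a b
  clear hconn
  induction w with
  | nil => exact absurd ha hb
  | @cons x y z hadj p ih =>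
      by_cases hy : y ∈ S
      · exact ih hy hb
      · exact ⟨x, y, ha, hy, Or.inr hadj⟩

/-- A vertex whose ball is `{x}` contradicts connectivity when there are ≥ 2 vertices. -/
lemma ball_ne_singleton (hconn : G.Connected) (hn : 2 ≤ Fintype.card V) (x : V) :
    _root_.ball G x ≠ {x} := by
  intro h
  have hS' : ({x} : Set V) ≠ Set.univ := by
    intro he
    have := Set.ncard_univ V ▸ he ▸ (Set.ncard_singleton x)
    simp [Nat.card_eq_fintype_card] at this
    omega
  obtain ⟨a, b, ha, hb, hball⟩ := cross G hconn {x} ⟨x, rfl⟩ hS'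
  rw [Set.mem_singleton_iff] at ha
  subst ha
  rw [h] at hball
  exact hb hball

end GraphBasics

section Main

variable [Fintype V] (G : SimpleGraph V) [DecidableRel G.Adj]

/-- node sets : `none` is the artificial empty node. -/
def bset : Option V → Set V := fun w => Option.elim w ∅ (_root_.ball G)

@[simp] lemma bset_none : bset G none = ∅ := rfl
@[simp] lemma bset_some (x : V) : bset G (some x) = _root_.ball G x := rfl

variable (C : Set V) (ed : V → Option V × Option V)

/-- The two key hypotheses produced by minimality of the code `C`. -/
def EdgeHyp : Prop :=
  ∀ c ∈ C, (ed c).1 ≠ (ed c).2 ∧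
    (symmDiff (bset G (ed c).1) (bset G (ed c).2)) ∩ C = {c}

variable {G C ed}

section EdgeFacts
variable (hE : EdgeHyp G C ed)
include hE

lemma edge_ne {c : V} (hc : c ∈ C) : (ed c).1 ≠ (ed c).2 := (hE c hc).1

lemma mem_edge_sd {c : V} (hc : c ∈ C) :
    c ∈ symmDiff (bset G (ed c).1) (bset G (ed c).2) := by
  have h := (hE c hc).2
  have : c ∈ symmDiff (bset G (ed c).1) (bset G (ed c).2) ∩ C := by
    rw [h]; rfl
  exact this.1

lemma not_mem_edge_sd {c : V} (hc : c ∈ C) {x : V} (hx : x ∈ C) (hne : x ≠ c) :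
    (x ∈ bset G (ed c).1 ↔ x ∈ bset G (ed c).2) := by
  have h := (hE c hc).2
  by_contra hcon
  have hxsd : x ∈ symmDiff (bset G (ed c).1) (bset G (ed c).2) := by
    rw [Set.mem_symmDiff]
    by_cases h1 : x ∈ bset G (ed c).1
    · exact Or.inl ⟨h1, fun h2 => hcon ⟨fun _ => h2, fun _ => h1⟩⟩
    · have h2 : x ∈ bset G (ed c).2 := by
        by_contra h2
        exact hcon ⟨fun h => absurd h h1, fun h => absurd h h2⟩
      exact Or.inr ⟨h2, h1⟩
  have : x ∈ ({c} : Set V) := h ▸ Set.mem_inter hxsd hx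
  exact hne this

/-- Invariance of the indicator of `c` under reachability avoiding `c`. -/
lemma rch_ind {c : V} (hc : c ∈ C) {w w' : Option V}
    (h : Rch ed (C \ {c}) w w') : (c ∈ bset G w ↔ c ∈ bset G w') := by
  refine rch_inv ed {w | c ∈ bset G w} ?_ h
  rintro c' ⟨hc', hne⟩
  exact not_mem_edge_sd hE hc' hc (fun h => hne (by simp [h]))

/-- Key separation: removing the edge of `c` disconnects its endpoints. -/
lemma K2 {c : V} (hc : c ∈ C) : ¬ Rch ed (C \ {c}) (ed c).1 (ed c).2 := by
  intro h
  have h1 := rch_ind hE hc h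
  have h2 := mem_edge_sd hE hc
  rw [Set.mem_symmDiff] at h2
  rcases h2 with ⟨ha, hb⟩ | ⟨ha, hb⟩
  · exact hb (h1.mp ha)
  · exact hb (h1.mpr ha)

end EdgeFacts

/-- The setoid of reachability classes. -/
def sC (C : Set V) (ed : V → Option V × Option V) : Setoid (Option V) :=
  ⟨Rch ed C, ⟨fun w => rch_refl ed w, fun h => rch_symm ed h,
    fun h h' => rch_trans ed h h'⟩⟩

/-- The canonical root of the reachability class. -/
noncomputable def rt (C : Set V) (ed : V → Option V × Option V) :
    Option V → Option V := fun w => (Quotient.mk (sC C ed) w).out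

lemma rt_rch (w : Option V) : Rch ed C w (rt C ed w) :=
  rch_symm ed (Quotient.mk_out (s := sC C ed) w)

lemma rt_eq {w w' : Option V} (h : Rch ed C w w') : rt C ed w = rt C ed w' :=
  congrArg Quotient.out (Quotient.sound (α := Option V) (s := sC C ed) h)

lemma rt_idem (w : Option V) : rt C ed (rt C ed w) = rt C ed w :=
  (rt_eq (rt_rch w)).symm


section Psi

variable (hE : EdgeHyp G C ed)

/-- The endpoint of the edge of `c` that does not reach the root without that edge. -/
noncomputable def psi (C : Set V) (ed : V → Option V × Option V) (c : V) : Option V :=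
  if Rch ed (C \ {c}) (ed c).1 (rt C ed (ed c).1) then (ed c).2 else (ed c).1

/-- The other endpoint. -/
noncomputable def othr (C : Set V) (ed : V → Option V × Option V) (c : V) : Option V :=
  if Rch ed (C \ {c}) (ed c).1 (rt C ed (ed c).1) then (ed c).1 else (ed c).2

lemma edge_eq_psi (c : V) :
    ed c = (psi C ed c, othr C ed c) ∨ ed c = (othr C ed c, psi C ed c) := by
  unfold psi othr
  by_cases h : Rch ed (C \ {c}) (ed c).1 (rt C ed (ed c).1)
  · rw [if_pos h, if_pos h]; exact Or.inr rfl
  · rw [if_neg h, if_neg h]; exact Or.inl rfl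

include hE

lemma rt_edge {c : V} (hc : c ∈ C) : rt C ed (ed c).1 = rt C ed (ed c).2 :=
  rt_eq (rch_single ed hc)

lemma psi_ne_othr {c : V} (hc : c ∈ C) : psi C ed c ≠ othr C ed c := by
  unfold psi othr
  by_cases h : Rch ed (C \ {c}) (ed c).1 (rt C ed (ed c).1)
  · rw [if_pos h, if_pos h]; exact (edge_ne hE hc).symm
  · rw [if_neg h, if_neg h]; exact edge_ne hE hc

lemma rt_psi {c : V} (hc : c ∈ C) : rt C ed (psi C ed c) = rt C ed (ed c).1 := by
  unfold psi
  by_cases h : Rch ed (C \ {c}) (ed c).1 (rt C ed (ed c).1)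
  · rw [if_pos h]; exact (rt_edge hE hc).symm
  · rw [if_neg h]

lemma psi_not {c : V} (hc : c ∈ C) :
    ¬ Rch ed (C \ {c}) (psi C ed c) (rt C ed (psi C ed c)) := by
  rw [rt_psi hE hc]
  unfold psi
  by_cases h : Rch ed (C \ {c}) (ed c).1 (rt C ed (ed c).1)
  · rw [if_pos h]
    intro h2
    exact K2 hE hc (rch_trans ed h (rch_symm ed h2))
  · rw [if_neg h]; exact h

lemma othr_rch {c : V} (hc : c ∈ C) :
    Rch ed (C \ {c}) (othr C ed c) (rt C ed (ed c).1) := by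
  unfold othr
  by_cases h : Rch ed (C \ {c}) (ed c).1 (rt C ed (ed c).1)
  · rw [if_pos h]; exact h
  · rw [if_neg h]
    have hdec := rch_decomp ed c (rt_rch (C := C) (ed := ed) (ed c).1)
    rcases hdec with hd | ⟨hd1, hd2⟩ | ⟨hd1, hd2⟩
    · exact absurd hd h
    · exact hd2
    · exact absurd hd1 (K2 hE hc)

lemma psi_ne_rt {c : V} (hc : c ∈ C) : psi C ed c ≠ rt C ed (psi C ed c) := by
  intro h
  exact psi_not hE hc (h ▸ rch_refl ed _)

lemma psi_rch_edge {c : V} (hc : c ∈ C) : Rch ed C (ed c).1 (psi C ed c) := by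
  unfold psi
  by_cases h : Rch ed (C \ {c}) (ed c).1 (rt C ed (ed c).1)
  · rw [if_pos h]; exact rch_single ed hc
  · rw [if_neg h]; exact rch_refl ed _

lemma psi_inj : Set.InjOn (psi C ed) C := by
  intro c hc c' hc' heq
  by_contra hne
  set w := psi C ed c with hw
  have hw' : psi C ed c' = w := heq.symm
  have hr1 : rt C ed w = rt C ed (ed c).1 := rt_psi hE hc
  have hr2 : rt C ed w = rt C ed (ed c').1 := by rw [← hw']; exact rt_psi hE hc'
  set r := rt C ed w with hrdef
  have hnoc : ¬ Rch ed (C \ {c}) w r := psi_not hE hc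
  have hnoc' : ¬ Rch ed (C \ {c'}) w r := by
    have := psi_not hE hc'
    rw [hw'] at this
    exact this
  have hoc' : Rch ed (C \ {c'}) (othr C ed c') r := by
    have h0 := othr_rch hE hc'
    rw [← hr2] at h0; exact h0
  have hstep : Rch ed (C \ {c}) w (othr C ed c') := by
    refine Relation.ReflTransGen.single ?_
    refine ⟨c', ⟨hc', fun h => hne ((by simpa using h : c' = c)).symm⟩, ?_⟩
    rcases edge_eq_psi (C := C) (ed := ed) c' with h | h
    · rw [hw'] at h; exact Or.inl h
    · rw [hw'] at h; exact Or.inr h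
  have hno2 : ¬ Rch ed (C \ {c}) (othr C ed c') r :=
    fun h => hnoc (rch_trans ed hstep h)
  have hdec := rch_decomp ed c hoc'
  have hsub1 : (C \ {c'}) \ {c} ⊆ C \ {c} := fun x hx => ⟨hx.1.1, hx.2⟩
  have hsub2 : (C \ {c'}) \ {c} ⊆ C \ {c'} := fun x hx => ⟨hx.1.1, hx.1.2⟩
  have hends : ((ed c).1 = w ∧ (ed c).2 = othr C ed c) ∨
      ((ed c).1 = othr C ed c ∧ (ed c).2 = w) := by
    rcases edge_eq_psi (C := C) (ed := ed) c with h | h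
    · exact Or.inl ⟨by rw [h], by rw [h]⟩
    · exact Or.inr ⟨by rw [h], by rw [h]⟩
  rcases hdec with hd | ⟨hd1, hd2⟩ | ⟨hd1, hd2⟩
  · exact hno2 (rch_mono ed hsub1 hd)
  · rcases hends with ⟨h1, h2⟩ | ⟨h1, h2⟩
    · have : Rch ed (C \ {c'}) (othr C ed c') w := by
        rw [← h1]; exact rch_mono ed hsub2 hd1
      exact hnoc' (rch_trans ed (rch_symm ed this) hoc')
    · have : Rch ed (C \ {c'}) w r := by
        rw [← h2]; exact rch_mono ed hsub2 hd2
      exact hnoc' this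
  · rcases hends with ⟨h1, h2⟩ | ⟨h1, h2⟩
    · have : Rch ed (C \ {c'}) w r := by
        rw [← h1]; exact rch_mono ed hsub2 hd2
      exact hnoc' this
    · have : Rch ed (C \ {c'}) (othr C ed c') w := by
        rw [← h2]; exact rch_mono ed hsub2 hd1
      exact hnoc' (rch_trans ed (rch_symm ed this) hoc')

/-- Per-class count: labels of edges inside the class of `w0` number at most size - 1. -/
lemma count_class (w0 : Option V) :
    ({c ∈ C | Rch ed C w0 (ed c).1} : Set V).ncard + 1 ≤
      ({w | Rch ed C w0 w} : Set (Option V)).ncard := by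
  classical
  set L : Set V := {c ∈ C | Rch ed C w0 (ed c).1} with hL
  set Z : Set (Option V) := {w | Rch ed C w0 w} with hZ
  have hZfin : Z.Finite := Set.toFinite _
  have hrtZ : rt C ed w0 ∈ Z := rt_rch w0
  have himg : psi C ed '' L ⊆ Z \ {rt C ed w0} := by
    rintro w ⟨c, hcL, rfl⟩
    obtain ⟨hc, hrch⟩ := hcL
    have hwZ : psi C ed c ∈ Z := rch_trans ed hrch (psi_rch_edge hE hc)
    refine ⟨hwZ, ?_⟩
    intro hmem
    rw [Set.mem_singleton_iff] at hmem
    have h2 : rt C ed w0 = rt C ed (psi C ed c) := rt_eq hwZ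
    exact psi_ne_rt hE hc (by rw [hmem] at h2 ⊢; exact h2)
  have h1 : (psi C ed '' L).ncard = L.ncard :=
    Set.ncard_image_of_injOn ((psi_inj hE).mono (fun x hx => hx.1))
  have h2 : (psi C ed '' L).ncard ≤ (Z \ {rt C ed w0}).ncard :=
    Set.ncard_le_ncard himg hZfin.diff
  have h3 : (Z \ {rt C ed w0}).ncard = Z.ncard - 1 := by
    rw [Set.ncard_diff (by simpa using hrtZ) (Set.toFinite _)]
    simp
  have h4 : 1 ≤ Z.ncard := by
    have h5 : ({w0} : Set (Option V)).ncard ≤ Z.ncard :=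
      Set.ncard_le_ncard (by simp [hZ, Set.singleton_subset_iff]; exact rch_refl ed w0) hZfin
    simpa using h5
  omega

/-- Global count: `|C|` + (number of pairwise-unreachable nodes) ≤ n+1. -/
lemma count_global (R : Set (Option V))
    (hR : R.Pairwise fun w w' => ¬ Rch ed C w w') :
    C.ncard + R.ncard ≤ Fintype.card V + 1 := by
  classical
  have hinj : Set.InjOn (rt C ed) R := by
    intro w hw w' hw' heq
    by_contra hne
    exact hR hw hw' hne (rch_trans ed (rt_rch w) (heq ▸ rch_symm ed (rt_rch w')))
  have hdisj : Disjoint (psi C ed '' C) (rt C ed '' R) := by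
    rw [Set.disjoint_left]
    rintro w ⟨c, hc, rfl⟩ ⟨w', hw', heq⟩
    have h1 : rt C ed (psi C ed c) = psi C ed c := by
      rw [← heq, rt_idem]
    exact psi_ne_rt hE hc h1.symm
  have h1 : (psi C ed '' C).ncard = C.ncard := Set.ncard_image_of_injOn (psi_inj hE)
  have h2 : (rt C ed '' R).ncard = R.ncard := Set.ncard_image_of_injOn hinj
  have h3 : (psi C ed '' C ∪ rt C ed '' R).ncard =
      (psi C ed '' C).ncard + (rt C ed '' R).ncard :=
    Set.ncard_union_eq hdisj (Set.toFinite _) (Set.toFinite _)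
  have h4 : (psi C ed '' C ∪ rt C ed '' R).ncard ≤ (Set.univ : Set (Option V)).ncard :=
    Set.ncard_le_ncard (Set.subset_univ _) (Set.toFinite _)
  rw [Set.ncard_univ, Nat.card_eq_fintype_card, Fintype.card_option] at h4
  omega

end Psi


section Cases

variable (hconn : G.Connected)
include hconn

/-- The case `C = univ` is impossible. -/
lemma case_top (hE : EdgeHyp G C ed) (hn : 3 ≤ Fintype.card V)
    (hCuniv : C = Set.univ) (hCcard : C.ncard = Fintype.card V) : False := by
  classical
  by_cases hPend : ∃ c ∈ C, (ed c).1 = none ∨ (ed c).2 = none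
  · obtain ⟨c, hc, hcase⟩ := hPend
    -- the other endpoint is some x with ball x ∩ C = {c}
    have hx : ∃ x : V, _root_.ball G x ∩ C = {c} := by
      rcases hcase with h1 | h1
      · have h2 : (ed c).2 ≠ none := by
          intro h3; exact edge_ne hE hc (h1.trans h3.symm)
        obtain ⟨x, hx⟩ := Option.ne_none_iff_exists'.mp h2
        refine ⟨x, ?_⟩
        have := (hE c hc).2
        rw [h1, hx] at this
        simpa [symmDiff] using this
      · have h2 : (ed c).1 ≠ none := by
          intro h3; exact edge_ne hE hc (h3.trans h1.symm)
        obtain ⟨x, hx⟩ := Option.ne_none_iff_exists'.mp h2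
        refine ⟨x, ?_⟩
        have := (hE c hc).2
        rw [h1, hx] at this
        simpa [symmDiff] using this
    obtain ⟨x, hx⟩ := hx
    have hxc : x = c := by
      have h1 : x ∈ _root_.ball G x ∩ C := ⟨mem_ball_self G x, by rw [hCuniv]; trivial⟩
      rw [hx] at h1
      exact h1
    subst hxc
    have hballx : _root_.ball G x = {x} := by
      rw [← hx, hCuniv, Set.inter_univ]
    exact ball_ne_singleton G hconn (by omega) x hballx
  · -- no empty-node edges: `none` is isolated, giving 2 classes: |C| + 2 ≤ n+1
    push_neg at hPend
    have hiso : ∀ w, Rch ed C none w → w = none := by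
      intro w hw
      have h1 := rch_inv ed {v | v = none} ?_ hw
      · exact (h1.mp rfl).symm ▸ rfl
      · intro c hc
        obtain ⟨h1, h2⟩ := hPend c hc
        simp only [Set.mem_setOf_eq]
        exact ⟨fun h => absurd h h1, fun h => absurd h h2⟩
    obtain ⟨v0⟩ : Nonempty V := by
      have : 0 < Fintype.card V := by omega
      exact Fintype.card_pos_iff.mp this
    have hcount := count_global hE {none, some v0} ?_
    · have h2 : ({none, some v0} : Set (Option V)).ncard = 2 := by
        rw [Set.ncard_pair (by simp)]
      omega
    · intro w hw w' hw' hne hrch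
      simp only [Set.mem_insert_iff, Set.mem_singleton_iff] at hw hw'
      rcases hw with rfl | rfl <;> rcases hw' with rfl | rfl
      · exact hne rfl
      · exact absurd (hiso _ hrch) (by simp)
      · exact absurd (hiso _ (rch_symm ed hrch)) (by simp)
      · exact hne rfl


/-- If `|C| ≥ n-1` there are at most two reachability classes. -/
lemma two_classes (hE : EdgeHyp G C ed) (hn : 3 ≤ Fintype.card V)
    (hCcard : Fintype.card V - 1 ≤ C.ncard) :
    ∀ w w' : Option V, ¬ Rch ed C none w → ¬ Rch ed C none w' → Rch ed C w w' := by
  intro w w' hw hw'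
  by_contra hww
  have hwn : w ≠ none := fun h => hw (by rw [h]; exact rch_refl ed none)
  have hw'n : w' ≠ none := fun h => hw' (by rw [h]; exact rch_refl ed none)
  have hne : w ≠ w' := fun h => hww (by rw [h]; exact rch_refl ed w')
  have hcount := count_global hE {none, w, w'} ?_
  · have hcard3 : ({none, w, w'} : Set (Option V)).ncard = 3 := by
      rw [Set.ncard_insert_of_notMem (by simp [hwn.symm, hw'n.symm]) (Set.toFinite _),
        Set.ncard_pair hne]
    omega
  · intro a ha b hb hab hrch
    simp only [Set.mem_insert_iff, Set.mem_singleton_iff] at ha hb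
    rcases ha with rfl | rfl | rfl <;> rcases hb with rfl | rfl | rfl
    · exact hab rfl
    · exact hw hrch
    · exact hw' hrch
    · exact hw (rch_symm ed hrch)
    · exact hab rfl
    · exact hww hrch
    · exact hw' (rch_symm ed hrch)
    · exact hww (rch_symm ed hrch)
    · exact hab rfl

/-- Escape lemma: a path avoiding `d` starting in the class `A` of `ws` (w.r.t. avoiding
`cs`) either stays in `A` or passes through `ws`. -/
lemma escape (hE : EdgeHyp G C ed) {cs : V} (hcs : cs ∈ C) {ws : Option V}
    (hws : ws = (ed cs).1 ∨ ws = (ed cs).2) {d : V} (hdcs : d ≠ cs)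
    {u y : Option V} (hu : Rch ed (C \ {cs}) ws u)
    (h : Rch ed (C \ {d}) u y) :
    Rch ed (C \ {cs}) ws y ∨ Rch ed (C \ {d}) u ws := by
  induction h with
  | refl => exact Or.inl hu
  | tail hpre hstep ih =>
    rename_i b y'
    rcases ih with ih | ih
    swap
    · exact Or.inr ih
    obtain ⟨c'', hc'', hp⟩ := hstep
    by_cases hcc : c'' = cs
    · subst hcc
      -- b is an endpoint of the edge of cs; show b = ws or contradict K2
      have hbws : b = ws := by
        by_contra hbne
        rcases hp with hp | hp <;> rcases hws with hws | hws
        · -- ed cs = (b, y'), ws = .1 = b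
          exact hbne (by rw [hws, hp])
        · -- ws = .2 = y' ; Rch_{cs} ws b connects the two endpoints
          apply K2 hE hcs
          have h1 : (ed c'').1 = b := by rw [hp]
          rw [h1, ← hws]
          exact rch_symm ed ih
        · -- ed cs = (y', b), ws = .1 = y'
          apply K2 hE hcs
          have h2 : (ed c'').2 = b := by rw [hp]
          rw [← hws, h2]
          exact ih
        · exact hbne (by rw [hws, hp])
      subst hbws
      exact Or.inr hpre
    · refine Or.inl (rch_trans ed ih (Relation.ReflTransGen.single ⟨c'', ⟨hc''.1, hcc⟩, hp⟩))


/-- Case A: no edge touches the empty node. Impossible. -/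
lemma case_A (hE : EdgeHyp G C ed) (hn : 3 ≤ Fintype.card V)
    (hdeg' : ∀ x : V, (_root_.ball G x).ncard ≤ Fintype.card V - 2)
    (hCcard : C.ncard = Fintype.card V - 1)
    (hnoPend : ∀ c ∈ C, (ed c).1 ≠ none ∧ (ed c).2 ≠ none) : False := by
  classical
  set n := Fintype.card V with hndef
  have hiso : ∀ w, Rch ed C none w → w = none := by
    intro w hw
    have h1 := rch_inv ed {v | v = none} ?_ hw
    · exact (h1.mp rfl).symm ▸ rfl
    · intro c hc
      obtain ⟨h1, h2⟩ := hnoPend c hc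
      exact ⟨fun h => absurd h h1, fun h => absurd h h2⟩
  have htwo := two_classes hconn hE hn (le_of_eq hCcard.symm)
  have hCne : C.Nonempty := by
    rw [← Set.ncard_pos (Set.toFinite _)]
    omega
  obtain ⟨c1, hc1⟩ := hCne
  -- minimization over admissible (label, endpoint) pairs
  set Adm : Set (V × Option V) :=
    {p | p.1 ∈ C ∧ (p.2 = (ed p.1).1 ∨ p.2 = (ed p.1).2)} with hAdm
  set m : V × Option V → ℕ := fun p => {w | Rch ed (C \ {p.1}) p.2 w}.ncard with hm
  obtain ⟨pstar, hpstar, hminim⟩ :=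
    Set.exists_min_image Adm m (Set.toFinite _) ⟨(c1, (ed c1).1), hc1, Or.inl rfl⟩
  obtain ⟨hcs, hws⟩ := hpstar
  set cs := pstar.1 with hcsdef
  set ws := pstar.2 with hwsdef
  set A : Set (Option V) := {w | Rch ed (C \ {cs}) ws w} with hA
  -- the other endpoint
  set o : Option V := if ws = (ed cs).1 then (ed cs).2 else (ed cs).1 with ho
  have hwo : (ed cs = (ws, o)) ∨ (ed cs = (o, ws)) := by
    by_cases h2 : ws = (ed cs).1
    · rw [ho, if_pos h2]
      exact Or.inl (by rw [h2])
    · have h : ws = (ed cs).2 := by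
        rcases hws with h | h
        · exact absurd h h2
        · exact h
      rw [ho, if_neg h2]
      exact Or.inr (by rw [h])
  have hK2' : ¬ Rch ed (C \ {cs}) ws o := by
    intro hr
    rcases hwo with h | h
    · exact K2 hE hcs (by rw [show (ed cs).1 = ws by rw [h], show (ed cs).2 = o by rw [h]]; exact hr)
    · exact K2 hE hcs (by rw [show (ed cs).1 = o by rw [h], show (ed cs).2 = ws by rw [h]]; exact (rch_symm ed hr))
  -- A is a singleton
  have hAsing : ∀ w ∈ A, w = ws := by
    by_contra hcon
    push_neg at hcon
    obtain ⟨w, hwA, hwne⟩ := hcon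
    obtain ⟨c', hc', hr1, hr2⟩ := rch_extract ed hwA hwne.symm
    -- choose the endpoint whose class avoids ws
    have hchoice : ∃ u oo : Option V,
        (ed c' = (u, oo) ∨ ed c' = (oo, u)) ∧ ¬ Rch ed (C \ {c'}) u ws ∧
          Rch ed (C \ {cs}) ws u ∧ Rch ed (C \ {cs}) ws oo := by
      by_cases h1 : Rch ed (C \ {c'}) (ed c').1 ws
      · refine ⟨(ed c').2, (ed c').1, Or.inr (by simp), ?_, hr2, hr1⟩
        intro h2
        exact K2 hE hc'.1 (rch_trans ed h1 (rch_symm ed h2))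
      · exact ⟨(ed c').1, (ed c').2, Or.inl (by simp), h1, hr1, hr2⟩
    obtain ⟨u, oo, hedg, hnr, huA, hooA⟩ := hchoice
    -- the class of u avoiding c' is strictly inside A
    have hsub : {w' | Rch ed (C \ {c'}) u w'} ⊆ A := by
      intro y hy
      rcases escape hconn hE hcs hws hc'.2 huA hy with h | h
      · exact h
      · exact absurd h hnr
    have hoonot : oo ∉ {w' | Rch ed (C \ {c'}) u w'} := by
      intro hoo
      apply K2 hE hc'.1
      rcases hedg with h | h
      · rw [show (ed c').1 = u by rw [h], show (ed c').2 = oo by rw [h]]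
        exact hoo
      · rw [show (ed c').1 = oo by rw [h], show (ed c').2 = u by rw [h]]
        exact rch_symm ed hoo
    have hss : {w' | Rch ed (C \ {c'}) u w'} ⊂ A := ⟨hsub, fun hAs => hoonot (hAs hooA)⟩
    have hlt : m (c', u) < m (cs, ws) := by
      have := Set.ncard_lt_ncard hss (Set.toFinite _)
      exact this
    have hge := hminim (c', u) ⟨hc'.1, by
      rcases hedg with h | h
      · exact Or.inl (by rw [h])
      · exact Or.inr (by rw [h])⟩
    have hps : m (cs, ws) = m pstar := congrArg m Prod.mk.eta
    omega
  -- endpoints are real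
  have hwsnone : ws ≠ none := by
    rcases hws with h | h
    · rw [h]; exact (hnoPend cs hcs).1
    · rw [h]; exact (hnoPend cs hcs).2
  have honone : o ≠ none := by
    rcases hwo with h | h
    · have : (ed cs).2 = o := by rw [h]
      rw [← this]; exact (hnoPend cs hcs).2
    · have : (ed cs).1 = o := by rw [h]
      rw [← this]; exact (hnoPend cs hcs).1
  -- decomposition of all real nodes
  have hdecomp : ∀ w : Option V, w ≠ none → (w = ws ∨ Rch ed (C \ {cs}) o w) := by
    intro w hwn
    have h1 : Rch ed C ws w := by
      apply htwo
      · intro h; exact hwsnone (hiso ws h)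
      · intro h; exact hwn (hiso w h)
    rcases rch_decomp ed cs h1 with h | ⟨ha, hb⟩ | ⟨ha, hb⟩
    · exact Or.inl (hAsing w h)
    · -- ha : Rch_{cs} ws (ed cs).1
      rcases hwo with he | he
      · -- .1 = ws, .2 = o : hb gives Rch o w
        refine Or.inr ?_
        have : (ed cs).2 = o := by rw [he]
        rw [← this]; exact hb
      · -- .1 = o : ha : Rch ws o contra
        have : (ed cs).1 = o := by rw [he]
        rw [this] at ha
        exact absurd ha hK2'
    · rcases hwo with he | he
      · -- .2 = o : ha : Rch ws o contra
        have : (ed cs).2 = o := by rw [he]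
        rw [this] at ha
        exact absurd ha hK2'
      · refine Or.inr ?_
        have : (ed cs).1 = o := by rw [he]
        rw [← this]; exact hb
  -- indicator of cs
  have hxor : cs ∈ symmDiff (bset G ws) (bset G o) := by
    have := mem_edge_sd hE hcs
    rcases hwo with he | he
    · rwa [show (ed cs).1 = ws by rw [he], show (ed cs).2 = o by rw [he]] at this
    · rw [show (ed cs).1 = o by rw [he], show (ed cs).2 = ws by rw [he]] at this
      rw [Set.mem_symmDiff] at this ⊢
      tauto
  obtain ⟨xs, hxs⟩ := Option.ne_none_iff_exists'.mp hwsnone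
  rw [Set.mem_symmDiff] at hxor
  rcases hxor with ⟨h1, h2⟩ | ⟨h1, h2⟩
  · -- cs ∈ ball xs, not in bset o : ball cs = {xs}
    have hball : _root_.ball G cs = {xs} := by
      ext y
      rw [Set.mem_singleton_iff]
      constructor
      · intro hy
        by_contra hyne
        have hyws : (some y) ≠ ws := by rw [hxs]; simp [hyne]
        rcases hdecomp (some y) (by simp) with h | h
        · exact hyws h
        · have h3 : cs ∈ bset G (some y) := by
            simpa using (ball_comm G).mp hy
          exact h2 ((rch_ind hE hcs h).mpr h3)
      · intro hy
        rw [hy]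
        have h5 : cs ∈ _root_.ball G xs := by rw [hxs] at h1; simpa using h1
        exact (ball_comm G).mp h5
    have hcsxs : cs = xs := by
      have := mem_ball_self G cs
      rw [hball] at this
      exact this
    rw [hcsxs] at hball
    exact ball_ne_singleton G hconn (by omega) xs hball
  · -- cs ∈ bset o, not in bset ws : ball cs = univ \ {xs}
    have hball : _root_.ball G cs = Set.univ \ {xs} := by
      ext y
      simp only [Set.mem_diff, Set.mem_univ, true_and, Set.mem_singleton_iff]
      constructor
      · intro hy hyx
        rw [hyx] at hy
        apply h2
        rw [hxs]
        simpa using (ball_comm G).mp hy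
      · intro hy
        have hyws : (some y) ≠ ws := by rw [hxs]; simp [hy]
        rcases hdecomp (some y) (by simp) with h | h
        · exact absurd h hyws
        · have h4 : cs ∈ bset G (some y) := (rch_ind hE hcs h).mp h1
          simp only [bset_some] at h4
          exact (ball_comm G).mp h4
    have hcard : (_root_.ball G cs).ncard = n - 1 := by
      rw [hball, Set.ncard_diff (Set.subset_univ _) (Set.toFinite _), Set.ncard_univ,
        Nat.card_eq_fintype_card, Set.ncard_singleton]
    have := hdeg' cs
    omega


/-- Shape of an edge touching the empty node. -/
lemma pend_shape (hE : EdgeHyp G C ed) {c : V} (hc : c ∈ C)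
    (h : (ed c).1 = none ∨ (ed c).2 = none) :
    ∃ x : V, (ed c = (none, some x) ∨ ed c = (some x, none)) ∧ _root_.ball G x ∩ C = {c} := by
  classical
  rcases h with h1 | h1
  · have h2 : (ed c).2 ≠ none := fun h3 => edge_ne hE hc (h1.trans h3.symm)
    obtain ⟨x, hx⟩ := Option.ne_none_iff_exists'.mp h2
    refine ⟨x, Or.inl ?_, ?_⟩
    · have he : ed c = ((ed c).1, (ed c).2) := Prod.mk.eta.symm
      rw [h1, hx] at he
      exact he
    · have := (hE c hc).2
      rw [h1, hx] at this
      simpa [symmDiff] using this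
  · have h2 : (ed c).1 ≠ none := fun h3 => edge_ne hE hc (h3.trans h1.symm)
    obtain ⟨x, hx⟩ := Option.ne_none_iff_exists'.mp h2
    refine ⟨x, Or.inr ?_, ?_⟩
    · have he : ed c = ((ed c).1, (ed c).2) := Prod.mk.eta.symm
      rw [h1, hx] at he
      exact he
    · have := (hE c hc).2
      rw [h1, hx] at this
      simpa [symmDiff] using this

/-- Case B1: `z` is a pendant vertex whose edge in the forest touches the empty node. -/
lemma case_B1 (hE : EdgeHyp G C ed) (hn : 3 ≤ Fintype.card V)
    (hdeg' : ∀ x : V, (_root_.ball G x).ncard ≤ Fintype.card V - 2)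
    (z : V) (hCz : ∀ x : V, x ∈ C ↔ x ≠ z)
    (hCcard : C.ncard = Fintype.card V - 1)
    (c0 : V) (hc0 : c0 ∈ C) (hbz : _root_.ball G z ∩ C = {c0})
    (hedge0 : ed c0 = (none, some z) ∨ ed c0 = (some z, none))
    (hOnly : ∀ d ∈ C, ((ed d).1 = none ∨ (ed d).2 = none) → d = c0) : False := by
  classical
  set n := Fintype.card V with hndef
  have hn2 : 2 ≤ n := by omega
  have hc0z : c0 ≠ z := (hCz c0).mp hc0
  have hc0bz : c0 ∈ _root_.ball G z := by
    have : c0 ∈ _root_.ball G z ∩ C := by rw [hbz]; rfl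
    exact this.1
  have hballz : _root_.ball G z = {z, c0} := by
    ext y
    constructor
    · intro hy
      by_cases hyz : y = z
      · exact Or.inl hyz
      · have : y ∈ _root_.ball G z ∩ C := ⟨hy, (hCz y).mpr hyz⟩
        rw [hbz] at this
        exact Or.inr this
    · intro hy
      rcases hy with hy | hy
      · rw [hy]; exact mem_ball_self G z
      · rw [hy]; exact hc0bz
  -- `none` is isolated once the edge of c0 is removed
  have hNone : ∀ w, Rch ed (C \ {c0}) none w → w = none := by
    intro w hw
    have h1 := rch_inv ed {v | v = none} ?_ hw
    · exact (h1.mp rfl).symm ▸ rfl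
    · rintro d ⟨hd, hdc0⟩
      constructor
      · intro h
        exact absurd (hOnly d hd (Or.inl h)) hdc0
      · intro h
        exact absurd (hOnly d hd (Or.inr h)) hdc0
  -- global class of none
  set Z : Set (Option V) := {w | Rch ed C none w} with hZ
  have hnoneZ : none ∈ Z := rch_refl ed none
  have hzZ : some z ∈ Z := by
    rcases hedge0 with he | he
    · have h1 := rch_single ed (T := C) hc0
      rw [he] at h1
      exact h1
    · have h1 := rch_symm ed (rch_single ed (T := C) hc0)
      rw [he] at h1
      exact h1
  -- Z decomposes as {none} ∪ class of (some z) avoiding c0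
  have hMZ : ∀ w ∈ Z, w = none ∨ Rch ed (C \ {c0}) (some z) w := by
    intro w hw
    rcases rch_decomp ed c0 hw with h | ⟨ha, hb⟩ | ⟨ha, hb⟩
    · exact Or.inl (hNone w h)
    · rcases hedge0 with he | he
      · refine Or.inr ?_
        have h2 : (ed c0).2 = some z := by rw [he]
        rw [h2] at hb
        exact hb
      · have h2 : (ed c0).1 = some z := by rw [he]
        rw [h2] at ha
        exact absurd (hNone _ ha) (by simp)
    · rcases hedge0 with he | he
      · have h2 : (ed c0).2 = some z := by rw [he]
        rw [h2] at ha
        exact absurd (hNone _ ha) (by simp)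
      · refine Or.inr ?_
        have h2 : (ed c0).1 = some z := by rw [he]
        rw [h2] at hb
        exact hb
  have hi0z : c0 ∈ bset G (some z) := by simpa using hc0bz
  -- membership in ball c0 from the M part
  have hMball : ∀ y : V, Rch ed (C \ {c0}) (some z) (some y) → y ∈ _root_.ball G c0 := by
    intro y hy
    have := (rch_ind hE hc0 hy).mp hi0z
    simp only [bset_some] at this
    exact (ball_comm G).mp this
  -- do all nodes lie in Z?
  by_cases hS : ∃ w1, w1 ∉ Z
  swap
  · push_neg at hS
    have hball : _root_.ball G c0 = Set.univ := by
      apply Set.eq_univ_of_forall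
      intro y
      rcases hMZ (some y) (hS (some y)) with h | h
      · exact absurd h (by simp)
      · exact hMball y h
    have h1 := hdeg' c0
    rw [hball, Set.ncard_univ, Nat.card_eq_fintype_card] at h1
    omega
  obtain ⟨w1, hw1⟩ := hS
  have htwo := two_classes hconn hE hn (le_of_eq hCcard.symm)
  set O : Set (Option V) := {w | Rch ed C w1 w} with hO
  have hcover : ∀ w, w ∉ Z → w ∈ O := fun w hw => htwo w1 w hw1 hw
  have hdisjZO : ∀ w, w ∈ Z → w ∈ O → False := by
    intro w h1 h2
    exact hw1 (rch_trans ed h1 (rch_symm ed h2))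
  -- O is closed under reachability avoiding any c whose edge is in Z (both endpoints in Z)
  have hclosed : ∀ c ∈ C, (ed c).1 ∈ Z → (ed c).2 ∈ Z →
      ∀ w w', w ∈ O → w' ∈ O → Rch ed (C \ {c}) w w' := by
    intro c hcC h1 h2 w w' hwO hw'O
    have hr : Rch ed C w w' := rch_trans ed (rch_symm ed hwO) hw'O
    rcases rch_decomp ed c hr with h | ⟨ha, hb⟩ | ⟨ha, hb⟩
    · exact h
    · exfalso
      have : w ∈ Z := by
        refine rch_trans ed ?_ (rch_symm ed (rch_mono ed (Set.diff_subset) ha))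
        exact h1
      exact hdisjZO w this hwO
    · exfalso
      have : w ∈ Z := by
        refine rch_trans ed ?_ (rch_symm ed (rch_mono ed (Set.diff_subset) ha))
        exact h2
      exact hdisjZO w this hwO
  -- similarly Z is closed under reachability avoiding any c whose edge is in O
  have hclosedZ : ∀ c ∈ C, (ed c).1 ∈ O → (ed c).2 ∈ O →
      ∀ w w', w ∈ Z → w' ∈ Z → Rch ed (C \ {c}) w w' := by
    intro c hcC h1 h2 w w' hwZ hw'Z
    have hr : Rch ed C w w' := rch_trans ed (rch_symm ed hwZ) hw'Z
    rcases rch_decomp ed c hr with h | ⟨ha, hb⟩ | ⟨ha, hb⟩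
    · exact h
    · exfalso
      have : w ∈ O := by
        refine rch_trans ed ?_ (rch_symm ed (rch_mono ed (Set.diff_subset) ha))
        exact h1
      exact hdisjZO w hwZ this
    · exfalso
      have : w ∈ O := by
        refine rch_trans ed ?_ (rch_symm ed (rch_mono ed (Set.diff_subset) ha))
        exact h2
      exact hdisjZO w hwZ this
  -- the edge of c0 lies in Z
  have hc0edgeZ : (ed c0).1 ∈ Z ∧ (ed c0).2 ∈ Z := by
    rcases hedge0 with he | he
    · exact ⟨by rw [show (ed c0).1 = none by rw [he]]; exact hnoneZ,
        by rw [show (ed c0).2 = some z by rw [he]]; exact hzZ⟩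
    · exact ⟨by rw [show (ed c0).1 = some z by rw [he]]; exact hzZ,
        by rw [show (ed c0).2 = none by rw [he]]; exact hnoneZ⟩
  -- value of the c0 indicator on O
  by_cases hi0O : c0 ∈ bset G w1
  · -- then ball c0 = univ, contradiction
    have hball : _root_.ball G c0 = Set.univ := by
      apply Set.eq_univ_of_forall
      intro y
      by_cases hyZ : some y ∈ Z
      · rcases hMZ (some y) hyZ with h | h
        · exact absurd h (by simp)
        · exact hMball y h
      · have hyO : some y ∈ O := hcover _ hyZ
        have hr := hclosed c0 hc0 hc0edgeZ.1 hc0edgeZ.2 w1 (some y) (rch_refl ed w1) hyO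
        have := (rch_ind hE hc0 hr).mp hi0O
        simp only [bset_some] at this
        exact (ball_comm G).mp this
    have h1 := hdeg' c0
    rw [hball, Set.ncard_univ, Nat.card_eq_fintype_card] at h1
    omega
  -- now ball c0 = reals of Z
  have hballc0 : ∀ y : V, y ∈ _root_.ball G c0 ↔ some y ∈ Z := by
    intro y
    constructor
    · intro hy
      by_contra hyZ
      have hyO : some y ∈ O := hcover _ hyZ
      have hr := hclosed c0 hc0 hc0edgeZ.1 hc0edgeZ.2 w1 (some y) (rch_refl ed w1) hyO
      apply hi0O
      have hmem : c0 ∈ bset G (some y) := by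
        simpa using (ball_comm G).mp hy
      exact (rch_ind hE hc0 hr).mpr hmem
    · intro hyZ
      rcases hMZ (some y) hyZ with h | h
      · exact absurd h (by simp)
      · exact hMball y h
  set Rset : Set V := {y : V | some y ∈ Z} with hRset
  set Sset : Set V := {y : V | some y ∉ Z} with hSset
  have hballRset : _root_.ball G c0 = Rset := Set.ext fun y => hballc0 y
  have hzRset : z ∈ Rset := hzZ
  have hc0Rset : c0 ∈ Rset := by
    rw [← hballRset] at *
    exact (hballc0 c0).mpr ((hballc0 c0).mp (mem_ball_self G c0)) |> fun _ => mem_ball_self G c0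
  have hRcard : Rset.ncard ≤ n - 2 := by
    rw [← hballRset]
    exact hdeg' c0
  have hRS : ∀ y : V, y ∈ Rset ∨ y ∈ Sset := by
    intro y
    by_cases h : some y ∈ Z
    · exact Or.inl h
    · exact Or.inr h
  have hRSdisj : ∀ y : V, y ∈ Rset → y ∈ Sset → False := fun y h1 h2 => h2 h1
  have hRScard : Rset.ncard + Sset.ncard = n := by
    have hun : Rset ∪ Sset = Set.univ := Set.eq_univ_of_forall fun y => hRS y
    have hdis : Disjoint Rset Sset := Set.disjoint_left.mpr (fun y h1 h2 => hRSdisj y h1 h2)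
    have := Set.ncard_union_eq hdis (Set.toFinite _) (Set.toFinite _)
    rw [hun, Set.ncard_univ, Nat.card_eq_fintype_card] at this
    omega
  have hScard : 2 ≤ Sset.ncard := by omega
  -- label counting
  set LZ : Set V := {c ∈ C | Rch ed C none (ed c).1} with hLZ
  set LO : Set V := {c ∈ C | Rch ed C w1 (ed c).1} with hLO
  have hcZ := count_class hE none
  rw [← hLZ, ← hZ] at hcZ
  have hcO := count_class hE w1
  rw [← hLO, ← hO] at hcO
  have hLZLO : LZ.ncard + LO.ncard = n - 1 := by
    have hun : LZ ∪ LO = C := by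
      ext c
      constructor
      · rintro (h | h)
        · exact h.1
        · exact h.1
      · intro hcC
        by_cases h : (ed c).1 ∈ Z
        · exact Or.inl ⟨hcC, h⟩
        · exact Or.inr ⟨hcC, hcover _ h⟩
    have hdis : Disjoint LZ LO :=
      Set.disjoint_left.mpr (fun c h1 h2 => hdisjZO _ h1.2 h2.2)
    have := Set.ncard_union_eq hdis (Set.toFinite _) (Set.toFinite _)
    rw [hun, hCcard] at this
    omega
  have hZOcard : Z.ncard + O.ncard = n + 1 := by
    have hun : Z ∪ O = Set.univ := Set.eq_univ_of_forall fun w => by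
      by_cases h : w ∈ Z
      · exact Or.inl h
      · exact Or.inr (hcover _ h)
    have hdis : Disjoint Z O := Set.disjoint_left.mpr (fun w h1 h2 => hdisjZO w h1 h2)
    have := Set.ncard_union_eq hdis (Set.toFinite _) (Set.toFinite _)
    rw [hun, Set.ncard_univ, Nat.card_eq_fintype_card, Fintype.card_option] at this
    omega
  -- O consists of real nodes, in bijection with Sset
  have hOSset : O = some '' Sset := by
    ext w
    constructor
    · intro hwO
      have hwn : w ≠ none := by
        intro h
        exact hdisjZO w (h ▸ hnoneZ) hwO
      obtain ⟨y, hy⟩ := Option.ne_none_iff_exists'.mp hwn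
      refine ⟨y, ?_, hy.symm⟩
      intro hyZ
      exact hdisjZO w (hy ▸ hyZ) hwO
    · rintro ⟨y, hyS, rfl⟩
      exact hcover _ hyS
  have hOcard : O.ncard = Sset.ncard := by
    rw [hOSset]
    exact Set.ncard_image_of_injective _ (Option.some_injective V)
  have htight : LZ.ncard = Z.ncard - 1 ∧ LO.ncard = O.ncard - 1 := by
    have h1 : 1 ≤ Z.ncard := by
      have : ({none} : Set (Option V)).ncard ≤ Z.ncard :=
        Set.ncard_le_ncard (by simpa using hnoneZ) (Set.toFinite _)
      simpa using this
    omega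
  -- every label in LO lies in Sset and its ball is inside Sset
  have hLOS : ∀ c ∈ LO, c ∈ Sset ∧ ∀ y ∈ _root_.ball G c, y ∈ Sset := by
    intro c hcLO
    obtain ⟨hcC, hcO⟩ := hcLO
    have he2 : (ed c).2 ∈ O := rch_trans ed hcO (rch_single ed hcC)
    have hballS : ∀ y ∈ _root_.ball G c, y ∈ Sset := by
      intro y hy
      intro hyZ
      have hr := hclosedZ c hcC hcO he2 none (some y) hnoneZ hyZ
      have := (rch_ind hE hcC hr).mpr (by simpa using (ball_comm G).mp hy)
      simp at this
    exact ⟨hballS c (mem_ball_self G c), hballS⟩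
  -- the unique non-label b0 of Sset
  have hLOsub : LO ⊆ Sset := fun c hc => (hLOS c hc).1
  have hSdiff : (Sset \ LO).ncard = 1 := by
    rw [Set.ncard_diff hLOsub (Set.toFinite _)]
    omega
  obtain ⟨b0, hb0⟩ := Set.ncard_eq_one.mp hSdiff
  -- every vertex of Rset has its ball inside Rset
  have hRclosed : ∀ r ∈ Rset, ∀ y ∈ _root_.ball G r, y ∈ Rset := by
    intro r hr y hy
    by_cases hrz : r = z
    · subst hrz
      rw [hballz] at hy
      rcases hy with hy | hy
      · rw [hy]; exact hzRset
      · rw [hy]; exact hc0Rset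
    by_cases hrc0 : r = c0
    · subst hrc0
      rw [hballRset] at hy
      exact hy
    have hrC : r ∈ C := (hCz r).mpr hrz
    -- the edge of r is in Z (otherwise r ∈ LO ⊆ Sset, contradiction)
    have hredge : (ed r).1 ∈ Z := by
      by_contra h
      have : r ∈ LO := ⟨hrC, hcover _ h⟩
      exact hRSdisj r hr ((hLOS r this).1)
    have he2 : (ed r).2 ∈ Z := by
      by_contra h
      have h2 : (ed r).2 ∈ O := hcover _ h
      have h3 : (ed r).1 ∈ O := rch_trans ed h2 (rch_symm ed (rch_single ed hrC))
      exact hdisjZO _ hredge h3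
    -- suppose y ∉ Rset
    by_contra hyR
    have hyS : y ∈ Sset := (hRS y).resolve_left hyR
    -- pick s ∈ Sset, s ≠ b0
    have hsex : ∃ s ∈ Sset, s ≠ b0 := by
      by_contra hcon
      push_neg at hcon
      have : Sset ⊆ {b0} := fun s hs => hcon s hs
      have := Set.ncard_le_ncard this (Set.toFinite _)
      rw [Set.ncard_singleton] at this
      omega
    obtain ⟨s, hsS, hsb0⟩ := hsex
    have hsLO : s ∈ LO := by
      by_contra h
      have : s ∈ Sset \ LO := ⟨hsS, h⟩
      rw [hb0] at this
      exact hsb0 this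
    -- r is adjacent to all of O's reals in particular to s
    have hrs : r ∈ _root_.ball G s := by
      have hr1 : Rch ed (C \ {r}) (some y) (some s) :=
        hclosed r hrC hredge he2 (some y) (some s) (hcover _ hyS) (hcover _ hsS)
      have h2 : r ∈ bset G (some y) := by
        simpa using (ball_comm G).mp hy
      have := (rch_ind hE hrC hr1).mp h2
      simp only [bset_some] at this
      exact this
    have := (hLOS s hsLO).2 r hrs
    exact hRSdisj r hr this
  -- contradiction with connectivity
  have hRne : Rset ≠ Set.univ := by
    intro h
    have : Sset.ncard = 0 := by
      have h2 : Rset.ncard = n := by rw [h, Set.ncard_univ, Nat.card_eq_fintype_card]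
      omega
    omega
  obtain ⟨a, b, haR, hbR, hball⟩ := cross G hconn Rset ⟨z, hzRset⟩ hRne
  exact hbR (hRclosed a haR b hball)


/-- Case B2a: a pendant `c0` at `z` whose class (avoiding `c0`) contains `z`. -/
lemma case_B2a (hE : EdgeHyp G C ed) (hn : 3 ≤ Fintype.card V)
    (hdeg' : ∀ x : V, (_root_.ball G x).ncard ≤ Fintype.card V - 2)
    (z : V) (hCz : ∀ x : V, x ∈ C ↔ x ≠ z)
    (hCcard : C.ncard = Fintype.card V - 1)
    (c0 : V) (hc0 : c0 ∈ C)
    (hPendShape : ∀ d ∈ C, ((ed d).1 = none ∨ (ed d).2 = none) →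
      (ed d = (none, some d) ∨ ed d = (some d, none)) ∧ _root_.ball G d ∩ C = {d} ∧
        _root_.ball G d = {d, z})
    (hpair0 : ed c0 = (none, some c0) ∨ ed c0 = (some c0, none))
    (hball0 : _root_.ball G c0 = {c0, z})
    (hB2a : Rch ed (C \ {c0}) (some c0) (some z)) : False := by
  classical
  set n := Fintype.card V with hndef
  have hn2 : 2 ≤ n := by omega
  have hc0z : c0 ≠ z := (hCz c0).mp hc0
  have hzbc0 : z ∈ _root_.ball G c0 := by rw [hball0]; exact Or.inr rfl
  have hc0bz : c0 ∈ _root_.ball G z := (ball_comm G).mp hzbc0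
  -- the class of (some c0) avoiding c0 is within {some c0, some z}
  have hA0sub : ∀ w, Rch ed (C \ {c0}) (some c0) w → w = some c0 ∨ w = some z := by
    intro w hw
    have h1 : c0 ∈ bset G w := by
      refine (rch_ind hE hc0 hw).mp ?_
      simpa using mem_ball_self G c0
    match w with
    | none => exact absurd h1 (by simp)
    | some y =>
      have h2 : y ∈ _root_.ball G c0 := (ball_comm G).mpr (by simpa using h1)
      rw [hball0] at h2
      rcases h2 with h2 | h2
      · exact Or.inl (by rw [h2])
      · exact Or.inr (by rw [h2])
  -- extract the edge connecting (some c0) and (some z)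
  obtain ⟨c1, hc1, hr1, hr2⟩ := rch_extract ed hB2a (by simp [hc0z])
  have hc1C : c1 ∈ C := hc1.1
  have hc1c0 : c1 ≠ c0 := hc1.2
  have hpat : ed c1 = (some c0, some z) ∨ ed c1 = (some z, some c0) := by
    have he1 := hA0sub _ hr1
    have he2 := hA0sub _ hr2
    have hne := edge_ne hE hc1C
    have heta : ed c1 = ((ed c1).1, (ed c1).2) := Prod.mk.eta.symm
    rcases he1 with h1 | h1 <;> rcases he2 with h2 | h2
    · exact absurd (h1.trans h2.symm) hne
    · rw [h1, h2] at heta; exact Or.inl heta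
    · rw [h1, h2] at heta; exact Or.inr heta
    · exact absurd (h1.trans h2.symm) hne
  -- the symmetric difference of the two balls
  have hSD : symmDiff (_root_.ball G c0) (_root_.ball G z) ∩ C = {c1} := by
    have := (hE c1 hc1C).2
    rcases hpat with he | he
    · rw [show (ed c1).1 = some c0 by rw [he], show (ed c1).2 = some z by rw [he]] at this
      simpa using this
    · rw [show (ed c1).1 = some z by rw [he], show (ed c1).2 = some c0 by rw [he]] at this
      rw [symmDiff_comm] at this
      simpa using this
  have hc1z : c1 ≠ z := (hCz c1).mp hc1C
  have hc1SD : c1 ∈ symmDiff (_root_.ball G c0) (_root_.ball G z) := by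
    have : c1 ∈ ({c1} : Set V) := rfl
    rw [← hSD] at this
    exact this.1
  have hc1bz : c1 ∈ _root_.ball G z := by
    rw [Set.mem_symmDiff] at hc1SD
    rcases hc1SD with ⟨h1, h2⟩ | ⟨h1, h2⟩
    · rw [hball0] at h1
      rcases h1 with h1 | h1
      · exact absurd h1 hc1c0
      · exact absurd h1 hc1z
    · exact h1
  have hc1nc0 : c1 ∉ _root_.ball G c0 := by
    rw [hball0]
    intro h
    rcases h with h | h
    · exact hc1c0 h
    · exact hc1z h
  -- ball z = {z, c0, c1}
  have hballz : _root_.ball G z = {z, c0, c1} := by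
    ext y
    constructor
    · intro hy
      by_cases hyz : y = z
      · exact Or.inl hyz
      by_cases hyc0 : y = c0
      · exact Or.inr (Or.inl hyc0)
      have hySD : y ∈ symmDiff (_root_.ball G c0) (_root_.ball G z) ∩ C := by
        refine ⟨?_, (hCz y).mpr hyz⟩
        rw [Set.mem_symmDiff]
        refine Or.inr ⟨hy, ?_⟩
        rw [hball0]
        intro h
        rcases h with h | h
        · exact hyc0 h
        · exact hyz h
      rw [hSD] at hySD
      exact Or.inr (Or.inr hySD)
    · intro hy
      rcases hy with hy | hy | hy
      · rw [hy]; exact mem_ball_self G z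
      · rw [hy]; exact hc0bz
      · rw [hy]; exact hc1bz
  -- n ≥ 5
  have hzc0 : z ≠ c0 := fun h => hc0z h.symm
  have hzc1 : z ≠ c1 := fun h => hc1z h.symm
  have hc0c1 : c0 ≠ c1 := fun h => hc1c0 h.symm
  have hn5 : 5 ≤ n := by
    have h1 := hdeg' z
    rw [hballz] at h1
    have h2 : ({z, c0, c1} : Set V).ncard = 3 := by
      rw [Set.ncard_insert_of_notMem (by simp [hzc0, hzc1]) (Set.toFinite _),
        Set.ncard_pair hc0c1]
    omega
  -- only ∅-edge is that of c0
  have hOnly : ∀ d ∈ C, ((ed d).1 = none ∨ (ed d).2 = none) → d = c0 := by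
    intro d hd hdcase
    obtain ⟨hpaird, hbd, hballd⟩ := hPendShape d hd hdcase
    have hdbz : d ∈ _root_.ball G z := by
      refine (ball_comm G).mp ?_
      rw [hballd]
      exact Or.inr rfl
    rw [hballz] at hdbz
    rcases hdbz with h | h | h
    · exact absurd h ((hCz d).mp hd)
    · exact h
    · -- d = c1 : pendant twin, crossing contradiction
      exfalso
      subst h
      have hS'ne : ({z, c0, d} : Set V) ≠ Set.univ := by
        intro hu
        have h2 : ({z, c0, d} : Set V).ncard = 3 := by
          rw [Set.ncard_insert_of_notMem (by simp [hzc0, hzc1]) (Set.toFinite _),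
            Set.ncard_pair hc0c1]
        rw [hu, Set.ncard_univ, Nat.card_eq_fintype_card] at h2
        omega
      obtain ⟨a, b, haS, hbS, hball⟩ := cross G hconn {z, c0, d} ⟨z, Or.inl rfl⟩ hS'ne
      apply hbS
      rcases haS with ha | ha | ha
      · subst ha; rw [hballz] at hball; exact hball
      · subst ha
        rw [hball0] at hball
        rcases hball with h | h
        · exact Or.inr (Or.inl h)
        · exact Or.inl h
      · subst ha
        rw [hballd] at hball
        rcases hball with h | h
        · exact Or.inr (Or.inr h)
        · exact Or.inl h
  -- edges at the node (some c0)
  have hc0only : ∀ d ∈ C, d ≠ c0 → ((ed d).1 = some c0 ∨ (ed d).2 = some c0) → d = c1 := by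
    intro d hd hdc0 hdcase
    -- the other endpoint is in the class of some c0
    have hother : ∃ v, (ed d = (some c0, v) ∨ ed d = (v, some c0)) ∧
        Rch ed (C \ {c0}) (some c0) v := by
      rcases hdcase with h | h
      · refine ⟨(ed d).2, Or.inl (by rw [← h]), ?_⟩
        have := rch_single ed (T := C \ {c0}) (c := d) ⟨hd, hdc0⟩
        rw [h] at this
        exact this
      · refine ⟨(ed d).1, Or.inr (by rw [← h]), ?_⟩
        have := rch_symm ed (rch_single ed (T := C \ {c0}) (c := d) ⟨hd, hdc0⟩)
        rw [h] at this
        exact this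
    obtain ⟨v, hvpair, hvr⟩ := hother
    have hv := hA0sub v hvr
    have hvne : v ≠ some c0 := by
      intro h
      apply edge_ne hE hd
      rcases hvpair with hp | hp
      · rw [hp, h]
      · rw [hp, h]
    have hvz : v = some z := hv.resolve_left hvne
    subst hvz
    -- then the symmetric difference determines d = c1
    have hSDd : symmDiff (_root_.ball G c0) (_root_.ball G z) ∩ C = {d} := by
      have := (hE d hd).2
      rcases hvpair with he | he
      · rw [show (ed d).1 = some c0 by rw [he], show (ed d).2 = some z by rw [he]] at this
        simpa using this
      · rw [show (ed d).1 = some z by rw [he], show (ed d).2 = some c0 by rw [he]] at this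
        rw [symmDiff_comm] at this
        simpa using this
    have : ({d} : Set V) = {c1} := by rw [← hSDd, hSD]
    exact Set.singleton_eq_singleton_iff.mp this
  -- edges at the node (some z)
  have hzonly : ∀ d ∈ C, d ≠ c1 → ¬((ed d).1 = some z ∨ (ed d).2 = some z) := by
    intro d hd hdc1 hdcase
    have hdc0 : d ≠ c0 := by
      intro h
      subst h
      rcases hpair0 with hp | hp <;> rcases hdcase with h1 | h1 <;> rw [hp] at h1 <;>
        simp at h1
      · exact hzc0 h1.symm
      · exact hzc0 h1.symm
    have hother : ∃ v, (ed d = (some z, v) ∨ ed d = (v, some z)) ∧ v ≠ some z := by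
      rcases hdcase with h | h
      · refine ⟨(ed d).2, Or.inl (by rw [← h]), ?_⟩
        intro h2
        exact edge_ne hE hd (by rw [h, h2])
      · refine ⟨(ed d).1, Or.inr (by rw [← h]), ?_⟩
        intro h2
        exact edge_ne hE hd (by rw [h, h2])
    obtain ⟨v, hvpair, hvne⟩ := hother
    have hvr : Rch ed (C \ {c0}) (some c0) v := by
      refine rch_trans ed hB2a ?_
      rcases hvpair with hp | hp
      · have := rch_single ed (T := C \ {c0}) (c := d) ⟨hd, hdc0⟩
        rw [hp] at this
        exact this
      · have := rch_symm ed (rch_single ed (T := C \ {c0}) (c := d) ⟨hd, hdc0⟩)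
        rw [hp] at this
        exact this
    have hv := (hA0sub v hvr).resolve_right hvne
    subst hv
    apply hdc1
    apply hc0only d hd hdc0
    rcases hvpair with hp | hp
    · exact Or.inr (by rw [hp])
    · exact Or.inl (by rw [hp])
  -- class of none avoiding c1 is within {none, some c0}
  have hD : ∀ w, Rch ed (C \ {c1}) none w → w = none ∨ w = some c0 := by
    intro w hw
    have h1 := rch_inv ed {v | v = none ∨ v = some c0} ?_ hw
    · simpa using h1.mp (Or.inl rfl)
    · rintro d ⟨hd, hdc1⟩
      by_cases hdc0 : d = c0
      · subst hdc0
        rcases hpair0 with hp | hp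
        · rw [show (ed d).1 = none by rw [hp], show (ed d).2 = some d by rw [hp]]
          simp
        · rw [show (ed d).1 = some d by rw [hp], show (ed d).2 = none by rw [hp]]
          simp
      · have hd1 : (ed d).1 ≠ none := fun h => hdc0 (hOnly d hd (Or.inl h))
        have hd2 : (ed d).2 ≠ none := fun h => hdc0 (hOnly d hd (Or.inr h))
        have hd3 : (ed d).1 ≠ some c0 := fun h => hdc1 (hc0only d hd hdc0 (Or.inl h))
        have hd4 : (ed d).2 ≠ some c0 := fun h => hdc1 (hc0only d hd hdc0 (Or.inr h))
        simp only [Set.mem_setOf_eq]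
        constructor
        · rintro (h | h)
          · exact absurd h hd1
          · exact absurd h hd3
        · rintro (h | h)
          · exact absurd h hd2
          · exact absurd h hd4
  -- global class of none is within {none, some c0, some z}
  have hZsub : ∀ w, Rch ed C none w → w = none ∨ w = some c0 ∨ w = some z := by
    intro w hw
    have h1 := rch_inv ed {v | v = none ∨ v = some c0 ∨ v = some z} ?_ hw
    · simpa using h1.mp (Or.inl rfl)
    · intro d hd
      by_cases hdc0 : d = c0
      · subst hdc0
        rcases hpair0 with hp | hp
        · rw [show (ed d).1 = none by rw [hp], show (ed d).2 = some d by rw [hp]]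
          simp
        · rw [show (ed d).1 = some d by rw [hp], show (ed d).2 = none by rw [hp]]
          simp
      by_cases hdc1 : d = c1
      · subst hdc1
        rcases hpat with hp | hp
        · rw [show (ed d).1 = some c0 by rw [hp], show (ed d).2 = some z by rw [hp]]
          simp
        · rw [show (ed d).1 = some z by rw [hp], show (ed d).2 = some c0 by rw [hp]]
          simp
      · have hd1 : (ed d).1 ≠ none := fun h => hdc0 (hOnly d hd (Or.inl h))
        have hd2 : (ed d).2 ≠ none := fun h => hdc0 (hOnly d hd (Or.inr h))
        have hd3 : (ed d).1 ≠ some c0 := fun h => hdc1 (hc0only d hd hdc0 (Or.inl h))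
        have hd4 : (ed d).2 ≠ some c0 := fun h => hdc1 (hc0only d hd hdc0 (Or.inr h))
        have hd5 : (ed d).1 ≠ some z := fun h => (hzonly d hd hdc1) (Or.inl h)
        have hd6 : (ed d).2 ≠ some z := fun h => (hzonly d hd hdc1) (Or.inr h)
        simp only [Set.mem_setOf_eq]
        constructor
        · rintro (h | h | h)
          · exact absurd h hd1
          · exact absurd h hd3
          · exact absurd h hd5
        · rintro (h | h | h)
          · exact absurd h hd2
          · exact absurd h hd4
          · exact absurd h hd6
  have hc1Z : ¬ Rch ed C none (some c1) := by
    intro h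
    rcases hZsub _ h with h | h | h
    · simp at h
    · simp only [Option.some.injEq] at h
      exact hc1c0 h
    · simp only [Option.some.injEq] at h
      exact hc1z h
  have htwo := two_classes hconn hE hn (le_of_eq hCcard.symm)
  -- Z contains some c0 and some z
  have hZc0 : Rch ed C none (some c0) := by
    rcases hpair0 with hp | hp
    · have := rch_single ed (T := C) hc0
      rw [hp] at this
      exact this
    · have := rch_symm ed (rch_single ed (T := C) hc0)
      rw [hp] at this
      exact this
  have hZz : Rch ed C none (some z) := by
    refine rch_trans ed hZc0 ?_
    rcases hpat with hp | hp
    · have := rch_single ed (T := C) hc1C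
      rw [hp] at this
      exact this
    · have := rch_symm ed (rch_single ed (T := C) hc1C)
      rw [hp] at this
      exact this
  -- the other class is closed avoiding c1
  have hOclosed : ∀ w w', ¬ Rch ed C none w → ¬ Rch ed C none w' →
      Rch ed (C \ {c1}) w w' := by
    intro w w' hw hw'
    have hr : Rch ed C w w' := htwo w w' hw hw'
    rcases rch_decomp ed c1 hr with h | ⟨ha, hb⟩ | ⟨ha, hb⟩
    · exact h
    · exfalso
      apply hw
      refine rch_trans ed ?_ (rch_symm ed (rch_mono ed Set.diff_subset ha))
      rcases hpat with hp | hp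
      · rw [show (ed c1).1 = some c0 by rw [hp]]; exact hZc0
      · rw [show (ed c1).1 = some z by rw [hp]]; exact hZz
    · exfalso
      apply hw
      refine rch_trans ed ?_ (rch_symm ed (rch_mono ed Set.diff_subset ha))
      rcases hpat with hp | hp
      · rw [show (ed c1).2 = some z by rw [hp]]; exact hZz
      · rw [show (ed c1).2 = some c0 by rw [hp]]; exact hZc0
  -- ball c1 contains everything except c0
  have hsup : ∀ y : V, y ≠ c0 → y ∈ _root_.ball G c1 := by
    intro y hyc0
    by_cases hyZ : Rch ed C none (some y)
    · rcases hZsub _ hyZ with h | h | h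
      · simp at h
      · simp only [Option.some.injEq] at h
        exact absurd h hyc0
      · simp only [Option.some.injEq] at h
        rw [h]
        exact (ball_comm G).mp hc1bz
    · have hr := hOclosed (some c1) (some y) hc1Z hyZ
      have h1 : c1 ∈ bset G (some y) := by
        refine (rch_ind hE hc1C hr).mp ?_
        simpa using mem_ball_self G c1
      exact (ball_comm G).mpr (by simpa using h1)
  have hsub2 : Set.univ \ {c0} ⊆ _root_.ball G c1 := by
    rintro y ⟨-, hy⟩
    exact hsup y hy
  have hcard2 : (Set.univ \ ({c0} : Set V)).ncard = n - 1 := by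
    rw [Set.ncard_diff (Set.subset_univ _) (Set.toFinite _), Set.ncard_univ,
      Nat.card_eq_fintype_card, Set.ncard_singleton]
  have h3 := Set.ncard_le_ncard hsub2 (Set.toFinite _)
  have h4 := hdeg' c1
  omega

/-- Case B2: a pendant vertex attached to `z` has its edge touching the empty node. -/
lemma case_B2 (hE : EdgeHyp G C ed) (hn : 3 ≤ Fintype.card V)
    (hdeg' : ∀ x : V, (_root_.ball G x).ncard ≤ Fintype.card V - 2)
    (z : V) (hCz : ∀ x : V, x ∈ C ↔ x ≠ z)
    (hCcard : C.ncard = Fintype.card V - 1)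
    (c0 : V) (hc0 : c0 ∈ C)
    (hPendShape : ∀ d ∈ C, ((ed d).1 = none ∨ (ed d).2 = none) →
      (ed d = (none, some d) ∨ ed d = (some d, none)) ∧ _root_.ball G d ∩ C = {d} ∧
        _root_.ball G d = {d, z})
    (hedge0 : (ed c0).1 = none ∨ (ed c0).2 = none) : False := by
  classical
  set n := Fintype.card V with hndef
  obtain ⟨hpair0, hbc0, hball0⟩ := hPendShape c0 hc0 hedge0
  by_cases hB2a : ∃ d ∈ C, ((ed d).1 = none ∨ (ed d).2 = none) ∧
      Rch ed (C \ {d}) (some d) (some z)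
  · obtain ⟨d, hd, hdcase, hrch⟩ := hB2a
    obtain ⟨hpaird, hbd, hballd⟩ := hPendShape d hd hdcase
    exact case_B2a hconn hE hn hdeg' z hCz hCcard d hd hPendShape hpaird hballd hrch
  · push_neg at hB2a
    have hc0z : c0 ≠ z := (hCz c0).mp hc0
    have hzbc0 : z ∈ _root_.ball G c0 := by rw [hball0]; exact Or.inr rfl
    have hc0bz : c0 ∈ _root_.ball G z := (ball_comm G).mp hzbc0
    -- classes of pendant nodes are singletons
    have hA : ∀ d ∈ C, ((ed d).1 = none ∨ (ed d).2 = none) →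
        ∀ w, Rch ed (C \ {d}) (some d) w → w = some d := by
      intro d hd hdcase w hw
      obtain ⟨hpaird, hbd, hballd⟩ := hPendShape d hd hdcase
      have h1 : d ∈ bset G w := by
        refine (rch_ind hE hd hw).mp ?_
        simpa using mem_ball_self G d
      match w with
      | none => exact absurd h1 (by simp)
      | some y =>
        have h2 : y ∈ _root_.ball G d := (ball_comm G).mpr (by simpa using h1)
        rw [hballd] at h2
        rcases h2 with h2 | h2
        · rw [h2]
        · exfalso
          rw [h2] at hw
          exact hB2a d hd hdcase hw
    -- pendant nodes are leaves
    have hleaf : ∀ d ∈ C, ((ed d).1 = none ∨ (ed d).2 = none) →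
        ∀ d' ∈ C, d' ≠ d → (ed d').1 ≠ some d ∧ (ed d').2 ≠ some d := by
      intro d hd hdcase d' hd' hne
      constructor
      · intro h
        have hstep : Rch ed (C \ {d}) (some d) (ed d').2 := by
          have := rch_single ed (T := C \ {d}) (c := d') ⟨hd', hne⟩
          rw [h] at this
          exact this
        have := hA d hd hdcase _ hstep
        exact edge_ne hE hd' (by rw [h, this])
      · intro h
        have hstep : Rch ed (C \ {d}) (some d) (ed d').1 := by
          have := rch_symm ed (rch_single ed (T := C \ {d}) (c := d') ⟨hd', hne⟩)
          rw [h] at this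
          exact this
        have := hA d hd hdcase _ hstep
        exact edge_ne hE hd' (by rw [h, this])
    -- the class of none consists of none and the pendant nodes
    have hZsub : ∀ w, Rch ed C none w →
        w = none ∨ ∃ d ∈ C, ((ed d).1 = none ∨ (ed d).2 = none) ∧ w = some d := by
      intro w hw
      have h1 := rch_inv ed
        {v | v = none ∨ ∃ d ∈ C, ((ed d).1 = none ∨ (ed d).2 = none) ∧ v = some d} ?_ hw
      · simpa using h1.mp (Or.inl rfl)
      · intro d hd
        by_cases hdcase : (ed d).1 = none ∨ (ed d).2 = none
        · obtain ⟨hpaird, -, -⟩ := hPendShape d hd hdcase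
          rcases hpaird with hp | hp
          · rw [show (ed d).1 = none by rw [hp], show (ed d).2 = some d by rw [hp]]
            simp only [Set.mem_setOf_eq]
            constructor
            · intro _; exact Or.inr ⟨d, hd, hdcase, rfl⟩
            · intro _; left; trivial
          · rw [show (ed d).1 = some d by rw [hp], show (ed d).2 = none by rw [hp]]
            simp only [Set.mem_setOf_eq]
            constructor
            · intro _; left; trivial
            · intro _; exact Or.inr ⟨d, hd, hdcase, rfl⟩
        · push_neg at hdcase
          simp only [Set.mem_setOf_eq]
          constructor
          · rintro (h | ⟨d', hd', hd'case, h⟩)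
            · exact absurd h hdcase.1
            · exfalso
              have hne : d ≠ d' := by
                intro he
                rcases hd'case with h2 | h2
                · exact hdcase.1 (by rw [he]; exact h2)
                · exact hdcase.2 (by rw [he]; exact h2)
              exact (hleaf d' hd' hd'case d hd hne).1 h
          · rintro (h | ⟨d', hd', hd'case, h⟩)
            · exact absurd h hdcase.2
            · exfalso
              have hne : d ≠ d' := by
                intro he
                rcases hd'case with h2 | h2
                · exact hdcase.1 (by rw [he]; exact h2)
                · exact hdcase.2 (by rw [he]; exact h2)
              exact (hleaf d' hd' hd'case d hd hne).2 h
    have hzZ : ¬ Rch ed C none (some z) := by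
      intro h
      rcases hZsub _ h with h1 | ⟨d, hd, -, h1⟩
      · simp at h1
      · simp only [Option.some.injEq] at h1
        exact (hCz d).mp hd h1.symm
    have htwo := two_classes hconn hE hn (le_of_eq hCcard.symm)
    have hZc0 : Rch ed C none (some c0) := by
      rcases hpair0 with hp | hp
      · have := rch_single ed (T := C) hc0
        rw [hp] at this
        exact this
      · have := rch_symm ed (rch_single ed (T := C) hc0)
        rw [hp] at this
        exact this
    have hOclosed : ∀ w w', ¬ Rch ed C none w → ¬ Rch ed C none w' →
        Rch ed (C \ {c0}) w w' := by
      intro w w' hw hw'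
      have hr : Rch ed C w w' := htwo w w' hw hw'
      rcases rch_decomp ed c0 hr with h | ⟨ha, hb⟩ | ⟨ha, hb⟩
      · exact h
      · exfalso
        apply hw
        refine rch_trans ed ?_ (rch_symm ed (rch_mono ed Set.diff_subset ha))
        rcases hpair0 with hp | hp
        · rw [show (ed c0).1 = none by rw [hp]]; exact rch_refl ed none
        · rw [show (ed c0).1 = some c0 by rw [hp]]; exact hZc0
      · exfalso
        apply hw
        refine rch_trans ed ?_ (rch_symm ed (rch_mono ed Set.diff_subset ha))
        rcases hpair0 with hp | hp
        · rw [show (ed c0).2 = some c0 by rw [hp]]; exact hZc0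
        · rw [show (ed c0).2 = none by rw [hp]]; exact rch_refl ed none
    -- any vertex outside Z equals z
    have hOz : ∀ y : V, ¬ Rch ed C none (some y) → y = z := by
      intro y hy
      have hr := hOclosed (some z) (some y) hzZ hy
      have h1 : c0 ∈ bset G (some y) := by
        refine (rch_ind hE hc0 hr).mp ?_
        simpa using hc0bz
      have h2 : y ∈ _root_.ball G c0 := (ball_comm G).mpr (by simpa using h1)
      rw [hball0] at h2
      rcases h2 with h2 | h2
      · exfalso
        rw [h2] at hy
        exact hy hZc0
      · exact h2
    -- ball z = univ
    have hballz : _root_.ball G z = Set.univ := by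
      apply Set.eq_univ_of_forall
      intro y
      by_cases hyz : y = z
      · rw [hyz]; exact mem_ball_self G z
      have hyZ : Rch ed C none (some y) := by
        by_contra h
        exact hyz (hOz y h)
      rcases hZsub _ hyZ with h1 | ⟨d, hd, hdcase, h1⟩
      · simp at h1
      · simp only [Option.some.injEq] at h1
        subst h1
        obtain ⟨-, -, hballd⟩ := hPendShape y hd hdcase
        have : z ∈ _root_.ball G y := by rw [hballd]; exact Or.inr rfl
        exact (ball_comm G).mp this
    have h1 := hdeg' z
    rw [hballz, Set.ncard_univ, Nat.card_eq_fintype_card] at h1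
    omega

/-- The case `C = univ \ {z}` is impossible. -/
lemma case_mid (hE : EdgeHyp G C ed) (hn : 3 ≤ Fintype.card V)
    (hdeg' : ∀ x : V, (_root_.ball G x).ncard ≤ Fintype.card V - 2)
    (z : V) (hCz : ∀ x : V, x ∈ C ↔ x ≠ z)
    (hCcard : C.ncard = Fintype.card V - 1) : False := by
  classical
  have hn2 : 2 ≤ Fintype.card V := by omega
  by_cases hPend : ∃ c ∈ C, (ed c).1 = none ∨ (ed c).2 = none
  swap
  · push_neg at hPend
    exact case_A hconn hE hn hdeg' hCcard hPend
  obtain ⟨c0, hc0, hcase⟩ := hPend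
  -- every ∅-edge label has a shape
  have hshape : ∀ d ∈ C, ((ed d).1 = none ∨ (ed d).2 = none) →
      ∃ x : V, (ed d = (none, some x) ∨ ed d = (some x, none)) ∧ _root_.ball G x ∩ C = {d} ∧
        (x = z ∨ x = d) := by
    intro d hd hdcase
    obtain ⟨x, hpair, hballx⟩ := pend_shape hconn hE hd hdcase
    refine ⟨x, hpair, hballx, ?_⟩
    by_cases hxz : x = z
    · exact Or.inl hxz
    · refine Or.inr ?_
      have hx1 : x ∈ _root_.ball G x ∩ C := ⟨mem_ball_self G x, (hCz x).mpr hxz⟩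
      rw [hballx] at hx1
      exact hx1
  by_cases hB1 : ∃ c ∈ C, _root_.ball G z ∩ C = {c} ∧
      (ed c = (none, some z) ∨ ed c = (some z, none))
  · obtain ⟨c, hc, hbz, hedge⟩ := hB1
    -- the only ∅-edge label is c
    have hOnly : ∀ d ∈ C, ((ed d).1 = none ∨ (ed d).2 = none) → d = c := by
      intro d hd hdcase
      obtain ⟨x, hpair, hballx, hxcand⟩ := hshape d hd hdcase
      rcases hxcand with hxz | hxd
      · -- x = z : ball z ∩ C = {d} and = {c}
        rw [hxz] at hballx
        have hcd : (c : V) ∈ ({d} : Set V) := by rw [← hballx, hbz]; rfl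
        exact hcd.symm
      · -- pendant at z : x = d, then d ∈ ball z ∩ C = {c}
        rw [hxd] at hballx
        have hzball : z ∈ _root_.ball G d := by
          by_contra hzb
          apply ball_ne_singleton G hconn hn2 d
          apply Set.eq_singleton_iff_unique_mem.mpr
          refine ⟨mem_ball_self G d, ?_⟩
          intro y hy
          by_cases hyz : y = z
          · exact absurd (hyz ▸ hy) hzb
          · have : y ∈ _root_.ball G d ∩ C := ⟨hy, (hCz y).mpr hyz⟩
            rw [hballx] at this
            exact this
        have hmem2 : d ∈ _root_.ball G z ∩ C := ⟨(ball_comm G).mp hzball, hd⟩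
        rw [hbz] at hmem2
        exact hmem2
    exact case_B1 hconn hE hn hdeg' z hCz hCcard c hc hbz hedge hOnly
  · -- no B1 shape: every ∅-edge label is a pendant at z
    have hPendShape : ∀ d ∈ C, ((ed d).1 = none ∨ (ed d).2 = none) →
        (ed d = (none, some d) ∨ ed d = (some d, none)) ∧ _root_.ball G d ∩ C = {d} ∧
          _root_.ball G d = {d, z} := by
      intro d hd hdcase
      obtain ⟨x, hpair, hballx, hxcand⟩ := hshape d hd hdcase
      rcases hxcand with hxz | hxd
      · rw [hxz] at hballx hpair
        exact absurd ⟨d, hd, hballx, hpair⟩ hB1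
      · rw [hxd] at hballx hpair
        refine ⟨hpair, hballx, ?_⟩
        have hdz : d ≠ z := (hCz d).mp hd
        have hzball : z ∈ _root_.ball G d := by
          by_contra hzb
          apply ball_ne_singleton G hconn hn2 d
          apply Set.eq_singleton_iff_unique_mem.mpr
          refine ⟨mem_ball_self G d, ?_⟩
          intro y hy
          by_cases hyz : y = z
          · exact absurd (hyz ▸ hy) hzb
          · have : y ∈ _root_.ball G d ∩ C := ⟨hy, (hCz y).mpr hyz⟩
            rw [hballx] at this
            exact this
        apply Set.eq_of_subset_of_ncard_le
        · intro y hy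
          by_cases hyz : y = z
          · exact Or.inr hyz
          · have : y ∈ _root_.ball G d ∩ C := ⟨hy, (hCz y).mpr hyz⟩
            rw [hballx] at this
            exact Or.inl this
        · rw [Set.ncard_pair hdz]
          have h1 : ({d, z} : Set V) ⊆ _root_.ball G d := by
            intro y hy
            rcases hy with hy1 | hy1
            · rw [hy1]; exact mem_ball_self G d
            · rw [hy1]; exact hzball
          have := Set.ncard_le_ncard h1 (Set.toFinite _)
          rw [Set.ncard_pair hdz] at this
          omega
        · exact Set.toFinite _
    exact case_B2 hconn hE hn hdeg' z hCz hCcard c0 hc0 hPendShape hcase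

end Cases

end Main

theorem main_result {V : Type*} [Fintype V] (G : SimpleGraph V) [DecidableRel G.Adj]
    (hn : 3 ≤ Fintype.card V) (hconn : G.Connected) (hTF : TwinFree G)
    (hdeg : G.maxDegree ≤ Fintype.card V - 3) :
    gammaID G ≤ Fintype.card V - 2 := by
  classical
  set n := Fintype.card V with hndef
  by_contra hg
  push_neg at hg
  -- univ is an identifying code
  have huniv : IsIdCode G (Set.univ : Set V) := by
    constructor
    · exact fun x => ⟨x, mem_ball_self G x, trivial⟩
    · intro x y hxy h
      rw [Set.inter_univ, Set.inter_univ] at h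
      exact hxy (hTF x y h)
  have hSne : {k | ∃ C : Set V, IsIdCode G C ∧ C.ncard = k}.Nonempty :=
    ⟨(Set.univ : Set V).ncard, Set.univ, huniv, rfl⟩
  have hmem := Nat.sInf_mem hSne
  obtain ⟨C, hC, hCcard⟩ := hmem
  have hgeq : gammaID G = C.ncard := hCcard.symm
  have hle : gammaID G ≤ n := by
    have h1 : (Set.univ : Set V).ncard = n := by
      rw [Set.ncard_univ, Nat.card_eq_fintype_card]
    have := Nat.sInf_le (s := {k | ∃ C : Set V, IsIdCode G C ∧ C.ncard = k})
      ⟨Set.univ, huniv, h1⟩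
    exact this
  -- minimality
  have hmin : ∀ c ∈ C, ¬ IsIdCode G (C \ {c}) := by
    intro c hc hcode
    have h1 : (C \ {c}).ncard = C.ncard - 1 :=
      Set.ncard_diff_singleton_of_mem hc
    have h2 : gammaID G ≤ C.ncard - 1 :=
      Nat.sInf_le ⟨C \ {c}, hcode, h1⟩
    have h3 : 1 ≤ C.ncard := (Set.ncard_pos (Set.toFinite _)).mpr ⟨c, hc⟩
    omega
  -- edge data
  have hpairs : ∀ c : V, ∃ p : Option V × Option V, c ∈ C →
      p.1 ≠ p.2 ∧ (symmDiff (bset G p.1) (bset G p.2)) ∩ C = {c} := by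
    intro c
    by_cases hc : c ∈ C
    swap
    · exact ⟨(none, none), fun h => absurd h hc⟩
    have hfail := hmin c hc
    rw [IsIdCode, not_and_or] at hfail
    rcases hfail with hdom | hsep
    · push_neg at hdom
      obtain ⟨x, hx⟩ := hdom
      refine ⟨(some x, none), fun _ => ⟨by simp, ?_⟩⟩
      have h1 : _root_.ball G x ∩ C = {c} := by
        apply Set.eq_singleton_iff_unique_mem.mpr
        constructor
        · obtain ⟨y, hy⟩ := hC.1 x
          have hyc : y = c := by
            by_contra hyc
            have : y ∈ _root_.ball G x ∩ (C \ {c}) := ⟨hy.1, hy.2, hyc⟩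
            rw [hx] at this
            exact this
          exact hyc ▸ hy
        · intro y hy
          by_contra hyc
          have : y ∈ _root_.ball G x ∩ (C \ {c}) := ⟨hy.1, hy.2, hyc⟩
          rw [hx] at this
          exact this
      simpa [symmDiff] using h1
    · rw [IsSeparating] at hsep
      push_neg at hsep
      obtain ⟨x, y, hxy, hxyeq⟩ := hsep
      refine ⟨(some x, some y), fun _ => ⟨by simp [hxy], ?_⟩⟩
      apply Set.eq_singleton_iff_unique_mem.mpr
      constructor
      · refine ⟨?_, hc⟩
        rw [Set.mem_symmDiff]
        by_contra hcon
        push_neg at hcon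
        simp only [bset_some] at hcon
        apply hC.2 x y hxy
        ext t
        simp only [Set.mem_inter_iff]
        constructor
        · rintro ⟨ht1, ht2⟩
          by_cases htc : t = c
          · subst htc
            exact ⟨hcon.1 ht1, ht2⟩
          · have : t ∈ _root_.ball G x ∩ (C \ {c}) := ⟨ht1, ht2, htc⟩
            rw [hxyeq] at this
            exact ⟨this.1, ht2⟩
        · rintro ⟨ht1, ht2⟩
          by_cases htc : t = c
          · subst htc
            exact ⟨hcon.2 ht1, ht2⟩
          · have : t ∈ _root_.ball G y ∩ (C \ {c}) := ⟨ht1, ht2, htc⟩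
            rw [← hxyeq] at this
            exact ⟨this.1, ht2⟩
      · intro t ht
        obtain ⟨htsd, htC⟩ := ht
        by_contra htc
        rw [Set.mem_symmDiff] at htsd
        simp only [bset_some] at htsd
        rcases htsd with ⟨h1, h2⟩ | ⟨h1, h2⟩
        · have : t ∈ _root_.ball G x ∩ (C \ {c}) := ⟨h1, htC, htc⟩
          rw [hxyeq] at this
          exact h2 this.1
        · have : t ∈ _root_.ball G y ∩ (C \ {c}) := ⟨h1, htC, htc⟩
          rw [← hxyeq] at this
          exact h2 this.1
  choose ed hed using hpairs
  have hE : EdgeHyp G C ed := fun c hc => hed c hc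
  have hdeg' : ∀ x : V, (_root_.ball G x).ncard ≤ n - 2 := ball_ncard_le G hdeg hn
  have hcases : C.ncard = n ∨ C.ncard = n - 1 := by omega
  rcases hcases with hcard | hcard
  · -- C = univ
    have hCuniv : C = Set.univ := by
      apply Set.eq_of_subset_of_ncard_le (Set.subset_univ C)
      rw [Set.ncard_univ, Nat.card_eq_fintype_card, hcard]
    exact case_top hconn hE hn hCuniv hcard
  · -- C = univ \ {z}
    have hcompl : (Set.univ \ C : Set V).ncard = 1 := by
      rw [Set.ncard_diff (Set.subset_univ C) (Set.toFinite _), Set.ncard_univ,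
        Nat.card_eq_fintype_card]
      omega
    obtain ⟨z, hz⟩ := Set.ncard_eq_one.mp hcompl
    have hCz : ∀ x : V, x ∈ C ↔ x ≠ z := by
      intro x
      constructor
      · intro hx hxz
        have : x ∈ Set.univ \ C := by rw [hz, hxz]; rfl
        exact this.2 hx
      · intro hx
        by_contra hxC
        have : x ∈ Set.univ \ C := ⟨trivial, hxC⟩
        rw [hz] at this
        exact hx this
    exact case_mid hconn hE hn hdeg' z hCz hcard

end Stmt13

theorem stmt13 {V : Type*} [Fintype V] (G : SimpleGraph V) [DecidableRel G.Adj]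
    (hn : 3 ≤ Fintype.card V) (hconn : G.Connected) (hTF : TwinFree G)
    (hdeg : G.maxDegree ≤ Fintype.card V - 3) :
    gammaID G ≤ Fintype.card V - 2 :=
  Stmt13.main_result G hn hconn hTF hdeg
end

section
/- In the infinite graph A_∞, the only separating set is the entire vertex set: for every i, vertices x_i and x_{i+1} are separated only by y_{i+1}, and y_i and y_{i+1} are separated only by x_i; consequently no proper subset of V(A_∞) is a separating set. -/
open SimpleGraph

/-- The infinite graph `A_∞`: `inl i = x_i`, `inr j = y_j`; `X` and `Y` are cliques and
`x_i ~ y_j` iff `i < j`. -/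
def Ainf : SimpleGraph (ℤ ⊕ ℤ) where
  Adj u v := match u, v with
    | Sum.inl i, Sum.inl j => i ≠ j
    | Sum.inr i, Sum.inr j => i ≠ j
    | Sum.inl i, Sum.inr j => i < j
    | Sum.inr j, Sum.inl i => i < j
  symm := by
    refine ⟨?_⟩
    rintro (i | i) (j | j) h
    · exact h.symm
    · exact h
    · exact h
    · exact h.symm
  loopless := by
    refine ⟨?_⟩
    rintro (i | i) h
    · exact h rfl
    · exact h rfl


lemma mem_ball_ll (i j : ℤ) : Sum.inl j ∈ _root_.ball Ainf (Sum.inl i) := by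
  simp [_root_.ball, Ainf]; tauto

lemma mem_ball_lr (i j : ℤ) : Sum.inr j ∈ _root_.ball Ainf (Sum.inl i) ↔ i < j := by
  simp [_root_.ball, Ainf]

lemma mem_ball_rl (i j : ℤ) : Sum.inl j ∈ _root_.ball Ainf (Sum.inr i) ↔ j < i := by
  simp [_root_.ball, Ainf]

lemma mem_ball_rr (i j : ℤ) : Sum.inr j ∈ _root_.ball Ainf (Sum.inr i) := by
  simp [_root_.ball, Ainf]; tauto

theorem stmt15 :
    (∀ i : ℤ, ∀ S : Set (ℤ ⊕ ℤ),
      _root_.ball Ainf (Sum.inl i) ∩ S ≠ _root_.ball Ainf (Sum.inl (i + 1)) ∩ S → Sum.inr (i + 1) ∈ S) ∧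
    (∀ i : ℤ, ∀ S : Set (ℤ ⊕ ℤ),
      _root_.ball Ainf (Sum.inr i) ∩ S ≠ _root_.ball Ainf (Sum.inr (i + 1)) ∩ S → Sum.inl i ∈ S) ∧
    (∀ S : Set (ℤ ⊕ ℤ), IsSeparating Ainf S → S = Set.univ) := by
  have h1 : ∀ i : ℤ, ∀ S : Set (ℤ ⊕ ℤ),
      _root_.ball Ainf (Sum.inl i) ∩ S ≠ _root_.ball Ainf (Sum.inl (i + 1)) ∩ S → Sum.inr (i + 1) ∈ S := by
    intro i S h
    by_contra hn
    apply h
    ext u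
    simp only [Set.mem_inter_iff]
    rcases u with j | j
    · simp [mem_ball_ll]
    · constructor
      · rintro ⟨hb, hs⟩
        refine ⟨(mem_ball_lr _ _).2 ?_, hs⟩
        have := (mem_ball_lr i j).1 hb
        have : j ≠ i + 1 := fun hc => hn (hc ▸ hs)
        omega
      · rintro ⟨hb, hs⟩
        refine ⟨(mem_ball_lr _ _).2 ?_, hs⟩
        have := (mem_ball_lr (i+1) j).1 hb
        omega
  have h2 : ∀ i : ℤ, ∀ S : Set (ℤ ⊕ ℤ),
      _root_.ball Ainf (Sum.inr i) ∩ S ≠ _root_.ball Ainf (Sum.inr (i + 1)) ∩ S → Sum.inl i ∈ S := by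
    intro i S h
    by_contra hn
    apply h
    ext u
    simp only [Set.mem_inter_iff]
    rcases u with j | j
    · constructor
      · rintro ⟨hb, hs⟩
        refine ⟨(mem_ball_rl _ _).2 ?_, hs⟩
        have := (mem_ball_rl i j).1 hb
        omega
      · rintro ⟨hb, hs⟩
        refine ⟨(mem_ball_rl _ _).2 ?_, hs⟩
        have := (mem_ball_rl (i+1) j).1 hb
        have : j ≠ i := fun hc => hn (hc ▸ hs)
        omega
    · simp [mem_ball_rr]
  refine ⟨h1, h2, ?_⟩
  intro S hS
  ext u
  simp only [Set.mem_univ, iff_true]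
  rcases u with j | j
  · exact h2 j S (hS _ _ (by simp))
  · have := h1 (j - 1) S (hS _ _ (by simp only [ne_eq, Sum.inl.injEq]; omega))
    have e : j - 1 + 1 = j := by omega
    rwa [e] at this
end

section
/- Let G be a connected Δ-regular twin-free graph on n vertices with Δ ≥ 3. Then γ^ID(G) ≤ n·(1 − 1/(1 + Δ − Δ² + Δ³)). -/
open SimpleGraph Finset

section Aux

variable {V : Type*} {G : SimpleGraph V}

lemma exists_adj_closer (hconn : G.Connected) {s v : V} (h : v ≠ s) :
    ∃ u, G.Adj u v ∧ G.dist s u + 1 = G.dist s v := by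
  obtain ⟨p, hp⟩ := hconn.exists_walk_length_eq_dist s v
  obtain ⟨w, a, q, hq⟩ := SimpleGraph.Walk.exists_eq_cons_of_ne h p.reverse
  have hlen : q.length + 1 = p.length := by
    have := congrArg SimpleGraph.Walk.length hq
    simpa [SimpleGraph.Walk.length_reverse, eq_comm] using this
  have h2 : G.dist s w ≤ q.length := by
    simpa [SimpleGraph.Walk.length_reverse] using G.dist_le q.reverse
  have h3 : G.dist s v ≤ G.dist s w + 1 := by
    have ht := hconn.dist_triangle (u := s) (v := w) (w := v)
    have : G.dist w v = 1 := dist_eq_one_iff_adj.2 a.symm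
    omega
  exact ⟨w, a.symm, by omega⟩

open Classical in
/-- sphere of radius `k` around `s` -/
noncomputable def sphA {V : Type*} [Fintype V] (G : SimpleGraph V) (s : V) (k : ℕ) : Finset V :=
  Finset.univ.filter (fun v => G.dist s v = k)

lemma mem_sphA [Fintype V] {s v : V} {k : ℕ} : v ∈ sphA G s k ↔ G.dist s v = k := by
  simp [sphA]

lemma sphA_succ_card [Fintype V] [DecidableRel G.Adj] (hconn : G.Connected) {Δ : ℕ}
    (hreg : G.IsRegularOfDegree Δ) (s : V) {k : ℕ} (hk : 1 ≤ k) :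
    (sphA G s (k + 1)).card ≤ (Δ - 1) * (sphA G s k).card := by
  classical
  have hsub : sphA G s (k + 1) ⊆
      (sphA G s k).biUnion (fun u => (G.neighborFinset u).filter (fun t => G.dist s t = k + 1)) := by
    intro v hv
    rw [mem_sphA] at hv
    have hvs : v ≠ s := by rintro rfl; rw [G.dist_self] at hv; omega
    obtain ⟨u, hadj, hu⟩ := exists_adj_closer hconn hvs
    rw [Finset.mem_biUnion]
    refine ⟨u, mem_sphA.2 (by omega), ?_⟩
    simp only [Finset.mem_filter, SimpleGraph.mem_neighborFinset]
    exact ⟨hadj, hv⟩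
  calc (sphA G s (k + 1)).card
      ≤ ((sphA G s k).biUnion
          (fun u => (G.neighborFinset u).filter (fun t => G.dist s t = k + 1))).card :=
        Finset.card_le_card hsub
    _ ≤ ∑ u ∈ sphA G s k, ((G.neighborFinset u).filter (fun t => G.dist s t = k + 1)).card :=
        Finset.card_biUnion_le
    _ ≤ ∑ _u ∈ sphA G s k, (Δ - 1) := by
        refine Finset.sum_le_sum fun u hu => ?_
        rw [mem_sphA] at hu
        have hus : u ≠ s := by rintro rfl; rw [G.dist_self] at hu; omega
        obtain ⟨w, hw, hwd⟩ := exists_adj_closer hconn hus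
        have hwmem : w ∈ G.neighborFinset u := by
          rw [SimpleGraph.mem_neighborFinset]; exact hw.symm
        have hsubset : (G.neighborFinset u).filter (fun t => G.dist s t = k + 1) ⊆
            (G.neighborFinset u).erase w := by
          intro t ht
          rw [Finset.mem_filter] at ht
          refine Finset.mem_erase.2 ⟨?_, ht.1⟩
          rintro rfl; omega
        calc ((G.neighborFinset u).filter (fun t => G.dist s t = k + 1)).card
            ≤ ((G.neighborFinset u).erase w).card := Finset.card_le_card hsubset
          _ = (G.neighborFinset u).card - 1 := Finset.card_erase_of_mem hwmem
          _ = Δ - 1 := by rw [G.card_neighborFinset_eq_degree, hreg u]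
    _ = (Δ - 1) * (sphA G s k).card := by rw [Finset.sum_const, smul_eq_mul, mul_comm]

open Classical in
/-- ball of radius 3 -/
noncomputable def ball3A {V : Type*} [Fintype V] (G : SimpleGraph V) (s : V) : Finset V :=
  Finset.univ.filter (fun v => G.dist s v ≤ 3)

lemma mem_ball3A [Fintype V] {s v : V} : v ∈ ball3A G s ↔ G.dist s v ≤ 3 := by
  simp [ball3A]

lemma ball3A_card [Fintype V] [DecidableRel G.Adj] (hconn : G.Connected) {Δ : ℕ}
    (hreg : G.IsRegularOfDegree Δ) (s : V) :
    (ball3A G s).card ≤ 1 + Δ + (Δ - 1) * Δ + (Δ - 1) * ((Δ - 1) * Δ) := by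
  classical
  have h0 : (sphA G s 0).card ≤ 1 := by
    have : sphA G s 0 ⊆ {s} := by
      intro v hv
      rw [mem_sphA] at hv
      have : s = v := (hconn.dist_eq_zero_iff).1 hv
      simp [this.symm]
    simpa using Finset.card_le_card this
  have h1 : (sphA G s 1).card ≤ Δ := by
    have : sphA G s 1 ⊆ G.neighborFinset s := by
      intro v hv
      rw [mem_sphA] at hv
      rw [SimpleGraph.mem_neighborFinset]
      exact dist_eq_one_iff_adj.1 hv
    calc (sphA G s 1).card ≤ (G.neighborFinset s).card := Finset.card_le_card this
      _ = Δ := by rw [G.card_neighborFinset_eq_degree, hreg s]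
  have h2 : (sphA G s 2).card ≤ (Δ - 1) * Δ :=
    le_trans (sphA_succ_card hconn hreg s le_rfl) (Nat.mul_le_mul_left _ h1)
  have h3 : (sphA G s 3).card ≤ (Δ - 1) * ((Δ - 1) * Δ) :=
    le_trans (sphA_succ_card hconn hreg s (by norm_num)) (Nat.mul_le_mul_left _ h2)
  have hsub : ball3A G s ⊆ sphA G s 0 ∪ sphA G s 1 ∪ sphA G s 2 ∪ sphA G s 3 := by
    intro v hv
    rw [mem_ball3A] at hv
    simp only [Finset.mem_union, mem_sphA]
    omega
  have hcu : (sphA G s 0 ∪ sphA G s 1 ∪ sphA G s 2 ∪ sphA G s 3).card ≤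
      (sphA G s 0).card + (sphA G s 1).card + (sphA G s 2).card + (sphA G s 3).card := by
    have a1 := Finset.card_union_le (sphA G s 0 ∪ sphA G s 1 ∪ sphA G s 2) (sphA G s 3)
    have a2 := Finset.card_union_le (sphA G s 0 ∪ sphA G s 1) (sphA G s 2)
    have a3 := Finset.card_union_le (sphA G s 0) (sphA G s 1)
    omega
  calc (ball3A G s).card ≤ _ := Finset.card_le_card hsub
    _ ≤ _ := hcu
    _ ≤ 1 + Δ + (Δ - 1) * Δ + (Δ - 1) * ((Δ - 1) * Δ) :=
        add_le_add (add_le_add (add_le_add h0 h1) h2) h3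

lemma exists_packing [Fintype V] (G : SimpleGraph V) :
    ∃ S : Finset V, (∀ a ∈ S, ∀ b ∈ S, a ≠ b → 4 ≤ G.dist a b) ∧
      ∀ v : V, ∃ s ∈ S, G.dist s v ≤ 3 := by
  classical
  obtain ⟨S, hS, hmax⟩ := Finset.exists_max_image
    (Finset.univ.powerset.filter (fun S => ∀ a ∈ S, ∀ b ∈ S, a ≠ b → 4 ≤ G.dist a b))
    Finset.card ⟨∅, by simp⟩
  rw [Finset.mem_filter] at hS
  refine ⟨S, hS.2, fun v => ?_⟩
  by_contra hcon
  push_neg at hcon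
  have hvS : v ∉ S := fun hv => by
    have := hcon v hv; simp [G.dist_self] at this
  have hP : ∀ a ∈ insert v S, ∀ b ∈ insert v S, a ≠ b → 4 ≤ G.dist a b := by
    intro a ha b hb hab
    rcases Finset.mem_insert.1 ha with rfl | ha' <;> rcases Finset.mem_insert.1 hb with rfl | hb'
    · exact absurd rfl hab
    · have := hcon b hb'; rw [SimpleGraph.dist_comm] at this; omega
    · have := hcon a ha'; omega
    · exact hS.2 a ha' b hb' hab
  have := hmax (insert v S) (Finset.mem_filter.2 ⟨Finset.mem_powerset.2 (Finset.subset_univ _), hP⟩)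
  rw [Finset.card_insert_of_notMem hvS] at this
  omega

end Aux

theorem stmt18 {V : Type*} [Fintype V] (G : SimpleGraph V) [DecidableRel G.Adj]
    (hconn : G.Connected) (hTF : TwinFree G) (Δ : ℕ)
    (hreg : G.IsRegularOfDegree Δ) (hΔ3 : 3 ≤ Δ) :
    (gammaID G : ℝ) ≤
      (Fintype.card V : ℝ) *
        (1 - 1 / (1 + (Δ : ℝ) - (Δ : ℝ) ^ 2 + (Δ : ℝ) ^ 3)) := by
  classical
  obtain ⟨S, hP, hcover⟩ := exists_packing G
  set n := Fintype.card V with hn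
  set Dn : ℕ := 1 + Δ + (Δ - 1) * Δ + (Δ - 1) * ((Δ - 1) * Δ) with hDn
  have ballEq : ∀ x : V, _root_.ball G x = ↑(insert x (G.neighborFinset x)) := by
    intro x
    ext y
    simp [_root_.ball, SimpleGraph.mem_neighborFinset]
  have cardNB : ∀ x : V, (insert x (G.neighborFinset x)).card = Δ + 1 := by
    intro x
    rw [Finset.card_insert_of_notMem (by simp), G.card_neighborFinset_eq_degree, hreg x]
  have distNB : ∀ x a : V, a ∈ insert x (G.neighborFinset x) → G.dist a x ≤ 1 := by
    intro x a ha
    rcases Finset.mem_insert.1 ha with rfl | ha'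
    · simp [G.dist_self]
    · rw [SimpleGraph.mem_neighborFinset] at ha'
      exact le_of_eq (dist_eq_one_iff_adj.2 ha'.symm)
  have hnotsub : ∀ x : V, ¬ insert x (G.neighborFinset x) ⊆ S := by
    intro x hsubS
    have hne : (G.neighborFinset x).Nonempty := by
      rw [← Finset.card_pos, G.card_neighborFinset_eq_degree, hreg x]; omega
    obtain ⟨x', hx'⟩ := hne
    have hadj : G.Adj x x' := (SimpleGraph.mem_neighborFinset G x x').1 hx'
    have hx : x ∈ S := hsubS (Finset.mem_insert_self x _)
    have hx'S : x' ∈ S := hsubS (Finset.mem_insert_of_mem hx')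
    have h4 := hP x hx x' hx'S hadj.ne
    have : G.dist x x' = 1 := dist_eq_one_iff_adj.2 hadj
    omega
  have hdom : ∀ x : V, (_root_.ball G x ∩ (↑S : Set V)ᶜ).Nonempty := by
    intro x
    rcases Set.eq_empty_or_nonempty (_root_.ball G x ∩ (↑S : Set V)ᶜ) with he | h
    · exfalso
      refine hnotsub x fun a ha => ?_
      have haball : a ∈ _root_.ball G x := by rw [ballEq x]; exact_mod_cast ha
      by_contra haS
      exact Set.eq_empty_iff_forall_notMem.1 he a ⟨haball, haS⟩
    · exact h
  have hsep : IsSeparating G (↑S : Set V)ᶜ := by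
    intro x y hxy heq
    have hfin : insert x (G.neighborFinset x) \ S = insert y (G.neighborFinset y) \ S := by
      apply Finset.coe_injective
      rw [Finset.coe_sdiff, Finset.coe_sdiff, Set.diff_eq, Set.diff_eq, ← ballEq x, ← ballEq y]
      exact heq
    have hBne : insert x (G.neighborFinset x) ≠ insert y (G.neighborFinset y) := by
      intro h
      exact hxy (hTF x y (by rw [ballEq x, ballEq y, h]))
    have hdxy : insert x (G.neighborFinset x) \ insert y (G.neighborFinset y) ⊆ S := by
      intro a ha
      rw [Finset.mem_sdiff] at ha
      by_contra haS
      have : a ∈ insert y (G.neighborFinset y) \ S := by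
        rw [← hfin, Finset.mem_sdiff]; exact ⟨ha.1, haS⟩
      exact ha.2 (Finset.mem_sdiff.1 this).1
    have hdyx : insert y (G.neighborFinset y) \ insert x (G.neighborFinset x) ⊆ S := by
      intro a ha
      rw [Finset.mem_sdiff] at ha
      by_contra haS
      have : a ∈ insert x (G.neighborFinset x) \ S := by
        rw [hfin, Finset.mem_sdiff]; exact ⟨ha.1, haS⟩
      exact ha.2 (Finset.mem_sdiff.1 this).1
    have hne1 : (insert x (G.neighborFinset x) \ insert y (G.neighborFinset y)).Nonempty := by
      rcases Finset.eq_empty_or_nonempty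
        (insert x (G.neighborFinset x) \ insert y (G.neighborFinset y)) with he | h
      · exfalso
        have hsub := Finset.sdiff_eq_empty_iff_subset.1 he
        exact hBne (Finset.eq_of_subset_of_card_le hsub (by rw [cardNB x, cardNB y]))
      · exact h
    have hne2 : (insert y (G.neighborFinset y) \ insert x (G.neighborFinset x)).Nonempty := by
      rcases Finset.eq_empty_or_nonempty
        (insert y (G.neighborFinset y) \ insert x (G.neighborFinset x)) with he | h
      · exfalso
        have hsub := Finset.sdiff_eq_empty_iff_subset.1 he
        exact hBne (Finset.eq_of_subset_of_card_le hsub (by rw [cardNB x, cardNB y])).symm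
      · exact h
    by_cases hadj : G.Adj x y
    · obtain ⟨s1, hs1⟩ := hne1
      obtain ⟨s2, hs2⟩ := hne2
      rw [Finset.mem_sdiff] at hs1 hs2
      have hs1S : s1 ∈ S := hdxy (Finset.mem_sdiff.2 hs1)
      have hs2S : s2 ∈ S := hdyx (Finset.mem_sdiff.2 hs2)
      have hs12 : s1 ≠ s2 := fun h => hs1.2 (h ▸ hs2.1)
      have h4 := hP s1 hs1S s2 hs2S hs12
      have d1 : G.dist s1 x ≤ 1 := distNB x s1 hs1.1
      have d2 : G.dist y s2 ≤ 1 := by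
        rw [SimpleGraph.dist_comm]; exact distNB y s2 hs2.1
      have dxy : G.dist x y = 1 := dist_eq_one_iff_adj.2 hadj
      have t1 := hconn.dist_triangle (u := s1) (v := x) (w := s2)
      have t2 := hconn.dist_triangle (u := x) (v := y) (w := s2)
      omega
    · have hxmem : x ∉ insert y (G.neighborFinset y) := by
        simp only [Finset.mem_insert, SimpleGraph.mem_neighborFinset]
        push_neg
        exact ⟨hxy, fun h => hadj h.symm⟩
      have hymem : y ∉ insert x (G.neighborFinset x) := by
        simp only [Finset.mem_insert, SimpleGraph.mem_neighborFinset]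
        push_neg
        exact ⟨fun h => hxy h.symm, fun h => hadj h⟩
      have hxS : x ∈ S := hdxy (Finset.mem_sdiff.2 ⟨Finset.mem_insert_self x _, hxmem⟩)
      have hyS : y ∈ S := hdyx (Finset.mem_sdiff.2 ⟨Finset.mem_insert_self y _, hymem⟩)
      have h4 := hP x hxS y hyS hxy
      rcases Finset.eq_empty_or_nonempty (insert x (G.neighborFinset x) \ S) with he | h
      · exact hnotsub x (Finset.sdiff_eq_empty_iff_subset.1 he)
      · obtain ⟨a, ha⟩ := h
        have ha' : a ∈ insert y (G.neighborFinset y) \ S := hfin ▸ ha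
        rw [Finset.mem_sdiff] at ha ha'
        have d1 : G.dist a x ≤ 1 := distNB x a ha.1
        have d2 : G.dist a y ≤ 1 := distNB y a ha'.1
        have t1 := hconn.dist_triangle (u := x) (v := a) (w := y)
        rw [SimpleGraph.dist_comm (u := x) (v := a)] at t1
        omega
  have hcode : IsIdCode G (↑S : Set V)ᶜ := ⟨hdom, hsep⟩
  have hmn : S.card ≤ n := by
    rw [hn, ← Finset.card_univ]
    exact Finset.card_le_card (Finset.subset_univ S)
  have hγ : gammaID G ≤ n - S.card := by
    apply Nat.sInf_le
    refine ⟨(↑S : Set V)ᶜ, hcode, ?_⟩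
    rw [← Finset.coe_compl, Set.ncard_coe_finset, Finset.card_compl, hn]
  have hcount : n ≤ S.card * Dn := by
    have hsub : (Finset.univ : Finset V) ⊆ S.biUnion (fun s => ball3A G s) := by
      intro v _
      obtain ⟨s, hs, hds⟩ := hcover v
      exact Finset.mem_biUnion.2 ⟨s, hs, mem_ball3A.2 hds⟩
    calc n = (Finset.univ : Finset V).card := (Finset.card_univ).symm
      _ ≤ (S.biUnion (fun s => ball3A G s)).card := Finset.card_le_card hsub
      _ ≤ ∑ s ∈ S, (ball3A G s).card := Finset.card_biUnion_le
      _ ≤ ∑ _s ∈ S, Dn := Finset.sum_le_sum fun s _ => ball3A_card hconn hreg s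
      _ = S.card * Dn := by rw [Finset.sum_const, smul_eq_mul]
  -- now the real arithmetic
  obtain ⟨e, rfl⟩ : ∃ e, Δ = e + 3 := ⟨Δ - 3, by omega⟩
  have hDcast : (Dn : ℝ) = 1 + ((e + 3 : ℕ) : ℝ) - ((e + 3 : ℕ) : ℝ) ^ 2 + ((e + 3 : ℕ) : ℝ) ^ 3 := by
    have h1 : Dn = 1 + (e + 3) + (e + 2) * (e + 3) + (e + 2) * ((e + 2) * (e + 3)) := by
      rw [hDn, show e + 3 - 1 = e + 2 from rfl]
    rw [h1]
    push_cast
    ring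
  set Dr : ℝ := 1 + ((e + 3 : ℕ) : ℝ) - ((e + 3 : ℕ) : ℝ) ^ 2 + ((e + 3 : ℕ) : ℝ) ^ 3 with hDr
  have hDrpos : 0 < Dr := by
    rw [hDr]
    push_cast
    nlinarith [sq_nonneg ((e : ℝ)), (Nat.cast_nonneg e : (0:ℝ) ≤ e)]
  have hdiv : (n : ℝ) / Dr ≤ S.card := by
    rw [div_le_iff₀ hDrpos]
    have : (n : ℝ) ≤ (S.card : ℝ) * (Dn : ℝ) := by exact_mod_cast hcount
    rw [hDcast] at this
    exact this
  calc (gammaID G : ℝ) ≤ ((n - S.card : ℕ) : ℝ) := by exact_mod_cast hγ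
    _ = (n : ℝ) - S.card := by rw [Nat.cast_sub hmn]
    _ ≤ (n : ℝ) - (n : ℝ) / Dr := by linarith
    _ = (n : ℝ) * (1 - 1 / Dr) := by ring
end

section
/- If G is a Δ-regular twin-free graph with Δ ≥ 1, then for every vertex x of G, the set V(G)∖{x} is an identifying code of G. -/
open SimpleGraph

lemma myBall_eq {V : Type*} (G : SimpleGraph V) (x : V) :
    _root_.ball G x = insert x (G.neighborSet x) := by
  ext y; simp [_root_.ball, Set.mem_insert_iff, eq_comm, adj_comm]

lemma ball_ncard {V : Type*} [Fintype V] (G : SimpleGraph V) [DecidableRel G.Adj]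
    {Δ : ℕ} (hreg : G.IsRegularOfDegree Δ) (x : V) : (_root_.ball G x).ncard = Δ + 1 := by
  rw [myBall_eq, Set.ncard_insert_of_notMem (by simp) (Set.toFinite _)]
  have : (G.neighborSet x).ncard = G.degree x := by
    rw [Set.ncard_eq_toFinset_card']
    congr 1
  rw [this, hreg x]

theorem stmt19 {V : Type*} [Fintype V] (G : SimpleGraph V) [DecidableRel G.Adj]
    (hTF : TwinFree G) (Δ : ℕ) (hΔ : 1 ≤ Δ) (hreg : G.IsRegularOfDegree Δ) :
    ∀ x : V, IsIdCode G ({x}ᶜ : Set V) := by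
  intro x
  constructor
  · intro v
    by_cases hv : v = x
    · subst hv
      have hd : 0 < (G.neighborFinset v).card := by
        rw [← SimpleGraph.degree, hreg v]; omega
      obtain ⟨w, hw⟩ := Finset.card_pos.mp hd
      rw [SimpleGraph.mem_neighborFinset] at hw
      exact ⟨w, Or.inr hw, fun h => G.irrefl (h ▸ hw)⟩
    · exact ⟨v, Or.inl rfl, hv⟩
  · intro u v huv h
    have key : ∀ y, y ≠ x → (y ∈ _root_.ball G u ↔ y ∈ _root_.ball G v) := by
      intro y hy
      have := Set.ext_iff.mp h y
      simpa [hy] using this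
    have hne : _root_.ball G u ≠ _root_.ball G v := fun hb => huv (hTF u v hb)
    by_cases hu : x ∈ _root_.ball G u <;> by_cases hv : x ∈ _root_.ball G v
    · exact hne (Set.ext fun y => by
        by_cases hy : y = x
        · subst hy; simp [hu, hv]
        · exact key y hy)
    · have heq : _root_.ball G u = insert x (_root_.ball G v) := Set.ext fun y => by
        by_cases hy : y = x
        · subst hy; simp [hu]
        · simp [Set.mem_insert_iff, hy, key y hy]
      have h1 := ball_ncard G hreg u
      have h2 := ball_ncard G hreg v
      rw [heq, Set.ncard_insert_of_notMem hv (Set.toFinite _), h2] at h1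
      omega
    · have heq : _root_.ball G v = insert x (_root_.ball G u) := Set.ext fun y => by
        by_cases hy : y = x
        · subst hy; simp [hv]
        · simp [Set.mem_insert_iff, hy, (key y hy).symm]
      have h1 := ball_ncard G hreg u
      have h2 := ball_ncard G hreg v
      rw [heq, Set.ncard_insert_of_notMem hu (Set.toFinite _), h1] at h2
      omega
    · exact hne (Set.ext fun y => by
        by_cases hy : y = x
        · subst hy; simp [hu, hv]
        · exact key y hy)
end
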